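/- arXiv:0901.0682 — 4 statements merged into one kernel-verified Lean document; each statement's English description precedes it below -/
import Mathlib

section
/- Let K be a finite totally ramified extension of F = Frac W(k) of ramification index e, π a uniformizer of K, and π_n a p^n-th root of π. Let a_1, ..., a_{p^n-1} ∈ K and ζ a primitive p^n-th root of unity. Then for indices i, j in {1, ..., p^n - 1}, the equality v(a_i π_n^i (ζ^i - 1)) = v(a_j π_n^j (ζ^j - 1)) (with both sides finite) implies i = j. Here v is normalized by v(p) = 1. -/
open Finset Polynomial

section valaux
variable {A : Type*} [Field A]

theorem myv_one (v : A → EReal)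
    (hvfin : ∀ x : A, x ≠ 0 → v x ≠ ⊤) (hvbot : ∀ x : A, v x ≠ ⊥)
    (hvmul : ∀ x y : A, v (x * y) = v x + v y) : v 1 = ((0 : ℝ) : EReal) := by
  have h := hvmul 1 1
  rw [mul_one] at h
  set r : ℝ := (v 1).toReal with hrdef
  have hr : (r : EReal) = v 1 := EReal.coe_toReal (hvfin 1 one_ne_zero) (hvbot 1)
  rw [← hr, ← EReal.coe_add, EReal.coe_eq_coe_iff] at h
  rw [← hr, EReal.coe_eq_coe_iff]
  linarith

theorem myv_pow (v : A → EReal)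
    (hvfin : ∀ x : A, x ≠ 0 → v x ≠ ⊤) (hvbot : ∀ x : A, v x ≠ ⊥)
    (hvmul : ∀ x y : A, v (x * y) = v x + v y)
    (x : A) (r : ℝ) (hx : v x = (r : EReal)) :
    ∀ k : ℕ, v (x ^ k) = (((k : ℝ) * r : ℝ) : EReal) := by
  intro k
  induction k with
  | zero => simpa using myv_one v hvfin hvbot hvmul
  | succ k ih =>
    rw [pow_succ, hvmul, ih, hx, ← EReal.coe_add, EReal.coe_eq_coe_iff]
    push_cast
    ring

theorem myv_real (v : A → EReal)
    (hvfin : ∀ x : A, x ≠ 0 → v x ≠ ⊤) (hvbot : ∀ x : A, v x ≠ ⊥)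
    (x : A) (hx : x ≠ 0) : ∃ r : ℝ, v x = (r : EReal) :=
  ⟨(v x).toReal, (EReal.coe_toReal (hvfin x hx) (hvbot x)).symm⟩

/-- roots of unity have valuation 0 -/
theorem myv_rou (v : A → EReal)
    (hvfin : ∀ x : A, x ≠ 0 → v x ≠ ⊤) (hvbot : ∀ x : A, v x ≠ ⊥)
    (hvmul : ∀ x y : A, v (x * y) = v x + v y)
    (x : A) (N : ℕ) (hN : 0 < N) (hx : x ^ N = 1) : v x = ((0 : ℝ) : EReal) := by
  have hx0 : x ≠ 0 := by
    intro h; rw [h, zero_pow hN.ne'] at hx; exact zero_ne_one hx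
  obtain ⟨r, hr⟩ := myv_real v hvfin hvbot x hx0
  have h := myv_pow v hvfin hvbot hvmul x r hr N
  rw [hx, myv_one v hvfin hvbot hvmul, EReal.coe_eq_coe_iff] at h
  have : r = 0 := by
    have hN' : (N : ℝ) ≠ 0 := Nat.cast_ne_zero.mpr hN.ne'
    rcases mul_eq_zero.mp h.symm with h' | h'
    · exact absurd h' hN'
    · exact h'
  rw [hr, this]

theorem myv_neg (v : A → EReal)
    (hvfin : ∀ x : A, x ≠ 0 → v x ≠ ⊤) (hvbot : ∀ x : A, v x ≠ ⊥)
    (hvmul : ∀ x y : A, v (x * y) = v x + v y)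
    (x : A) : v (-x) = v x := by
  have h1 : v (-1 : A) = ((0:ℝ) : EReal) := by
    refine myv_rou v hvfin hvbot hvmul (-1) 2 (by norm_num) (by ring)
  have := hvmul (-1) x
  rw [neg_one_mul] at this
  rw [this, h1]
  simp

theorem myv_prod (v : A → EReal)
    (hvfin : ∀ x : A, x ≠ 0 → v x ≠ ⊤) (hvbot : ∀ x : A, v x ≠ ⊥)
    (hvmul : ∀ x y : A, v (x * y) = v x + v y)
    {β : Type*} (s : Finset β) (f : β → A) :
    v (∏ b ∈ s, f b) = ∑ b ∈ s, v (f b) := by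
  classical
  induction s using Finset.induction with
  | empty => simpa using myv_one v hvfin hvbot hvmul
  | insert _ _ hb ih =>
    rw [Finset.prod_insert hb, Finset.sum_insert hb, hvmul, ih]

theorem myv_sum_nonneg (v : A → EReal)
    (hv0 : v 0 = ⊤)
    (hvfin : ∀ x : A, x ≠ 0 → v x ≠ ⊤) (hvbot : ∀ x : A, v x ≠ ⊥)
    (hvmul : ∀ x y : A, v (x * y) = v x + v y)
    (hvadd : ∀ x y : A, min (v x) (v y) ≤ v (x + y))
    (ξ : A) (hξ : v ξ = ((0:ℝ) : EReal)) (a : ℕ) :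
    (0 : EReal) ≤ v (∑ t ∈ Finset.range a, ξ ^ t) := by
  induction a with
  | zero => simp [hv0]
  | succ a ih =>
    rw [Finset.sum_range_succ]
    refine le_trans ?_ (hvadd _ _)
    rw [myv_pow v hvfin hvbot hvmul ξ 0 hξ a]
    simp [le_min_iff, ih]

end valaux

section cyclo
variable {A : Type*} [Field A]

theorem ereal_nsmul (k : ℕ) (c : ℝ) : k • ((c : ℝ) : EReal) = (((k : ℝ) * c : ℝ) : EReal) := by
  induction k with
  | zero => simp
  | succ k ih =>
    rw [succ_nsmul, ih, ← EReal.coe_add, EReal.coe_eq_coe_iff]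
    push_cast; ring

theorem myv_ge (v : A → EReal)
    (hv0 : v 0 = ⊤)
    (hvfin : ∀ x : A, x ≠ 0 → v x ≠ ⊤) (hvbot : ∀ x : A, v x ≠ ⊥)
    (hvmul : ∀ x y : A, v (x * y) = v x + v y)
    (hvadd : ∀ x y : A, min (v x) (v y) ≤ v (x + y))
    (η : A) (N : ℕ) (hN : 0 < N) (hη : η ^ N = 1) (c : ℕ) :
    v (1 - η) ≤ v (1 - η ^ c) := by
  have hη0 : v η = ((0:ℝ) : EReal) := myv_rou v hvfin hvbot hvmul η N hN hη
  have hgeom : 1 - η ^ c = (∑ t ∈ Finset.range c, η ^ t) * (1 - η) := by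
    have := geom_sum_mul η c
    have h2 : (∑ t ∈ Finset.range c, η ^ t) * (1 - η) = -((∑ t ∈ Finset.range c, η ^ t) * (η - 1)) := by ring
    rw [h2, this]; ring
  rw [hgeom, hvmul]
  have h0 : (0 : EReal) ≤ v (∑ t ∈ Finset.range c, η ^ t) :=
    myv_sum_nonneg v hv0 hvfin hvbot hvmul hvadd η hη0 c
  calc v (1 - η) = 0 + v (1 - η) := by rw [zero_add]
    _ ≤ _ := add_le_add_left h0 _

theorem myv_primroot (v : A → EReal)
    (hv0 : v 0 = ⊤)
    (hvfin : ∀ x : A, x ≠ 0 → v x ≠ ⊤) (hvbot : ∀ x : A, v x ≠ ⊥)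
    (hvmul : ∀ x y : A, v (x * y) = v x + v y)
    (hvadd : ∀ x y : A, min (v x) (v y) ≤ v (x + y))
    (p m : ℕ) [hp : Fact p.Prime] (hm : 0 < m)
    (hp1 : v ((p : ℕ) : A) = ((1 : ℝ) : EReal))
    (ξ : A) (hξ : IsPrimitiveRoot ξ (p ^ m)) :
    v (1 - ξ) = ((1 / ((p ^ m).totient : ℝ) : ℝ) : EReal) := by
  classical
  have hppos : 0 < p ^ m := pow_pos hp.out.pos m
  haveI : NeZero (p ^ m) := ⟨hppos.ne'⟩
  -- product formula
  have hcyc := Polynomial.cyclotomic_eq_prod_X_sub_primitiveRoots hξ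
  have hev : Polynomial.eval 1 (Polynomial.cyclotomic (p ^ m) A) = ((p : ℕ) : A) := by
    obtain ⟨m', rfl⟩ : ∃ m', m = m' + 1 := ⟨m - 1, (Nat.succ_pred_eq_of_pos hm).symm⟩
    exact Polynomial.eval_one_cyclotomic_prime_pow m'
  rw [hcyc] at hev
  rw [Polynomial.eval_prod] at hev
  simp only [Polynomial.eval_sub, Polynomial.eval_X, Polynomial.eval_C] at hev
  -- each primitive root has same valuation as ξ
  have hsame : ∀ μ ∈ primitiveRoots (p ^ m) A, v (1 - μ) = v (1 - ξ) := by
    intro μ hμ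
    have hμp : IsPrimitiveRoot μ (p ^ m) := (mem_primitiveRoots hppos).1 hμ
    obtain ⟨c, -, -, hc⟩ := (hξ.isPrimitiveRoot_iff).1 hμp
    obtain ⟨d, -, -, hd⟩ := (hμp.isPrimitiveRoot_iff).1 hξ
    refine le_antisymm ?_ ?_
    · rw [← hd]
      exact myv_ge v hv0 hvfin hvbot hvmul hvadd μ (p ^ m) hppos hμp.pow_eq_one d
    · rw [← hc]
      exact myv_ge v hv0 hvfin hvbot hvmul hvadd ξ (p ^ m) hppos hξ.pow_eq_one c
  have hξ1 : (1 : A) - ξ ≠ 0 := by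
    rw [sub_ne_zero]
    intro h
    rw [← h] at hξ
    have h1 : (1 : ℕ) = p ^ m := (IsPrimitiveRoot.one (M := A)).unique hξ
    have h2 : 1 < p ^ m := Nat.one_lt_pow hm.ne' hp.out.one_lt
    omega
  obtain ⟨cV, hcV⟩ := myv_real v hvfin hvbot _ hξ1
  have hvprod := myv_prod v hvfin hvbot hvmul (primitiveRoots (p ^ m) A) (fun μ => 1 - μ)
  have hsum : ∑ μ ∈ primitiveRoots (p ^ m) A, v (1 - μ)
      = ((((p ^ m).totient : ℝ) * cV : ℝ) : EReal) := by
    rw [Finset.sum_congr rfl (fun μ hμ => (hsame μ hμ).trans hcV), Finset.sum_const,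
      ereal_nsmul, hξ.card_primitiveRoots]
  have hkey : ((1 : ℝ) : EReal) = ((((p ^ m).totient : ℝ) * cV : ℝ) : EReal) := by
    rw [← hp1, ← hev, hvprod, hsum]
  rw [EReal.coe_eq_coe_iff] at hkey
  have htot : ((p ^ m).totient : ℝ) ≠ 0 :=
    Nat.cast_ne_zero.mpr (Nat.totient_pos.mpr hppos).ne'
  rw [hcV, EReal.coe_eq_coe_iff]
  field_simp
  linarith [hkey]


theorem intkey_aux (p e n : ℕ) (hp : p.Prime) (i j : ℕ)
    (hi1 : 1 ≤ i) (hi2 : i < p ^ n) (hj1 : 1 ≤ j) (hj2 : j < p ^ n)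
    (hlt : i.factorization p < j.factorization p) (mi mj : ℤ)
    (heq : ((p : ℤ) - 1) * ((mi - mj) * (p : ℤ) ^ n + (i : ℤ) - (j : ℤ)) =
      (e : ℤ) * ((p : ℤ) ^ (j.factorization p + 1) - (p : ℤ) ^ (i.factorization p + 1))) :
    False := by
  set si := i.factorization p with hsi
  set sj := j.factorization p with hsj
  have hj0 : j ≠ 0 := by omega
  have hi0 : i ≠ 0 := by omega
  have hsjn : sj < n := by
    have h1 : p ^ sj ∣ j := Nat.ordProj_dvd j p
    have h2 : p ^ sj ≤ j := Nat.le_of_dvd (by omega) h1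
    have h3 : p ^ sj < p ^ n := lt_of_le_of_lt h2 hj2
    exact (pow_lt_pow_iff_right₀ hp.one_lt).mp h3
  have hsin : si + 1 ≤ n := by omega
  -- p^(si+1) divides RHS
  have hd1 : ((p : ℤ)) ^ (si + 1) ∣ (e : ℤ) * ((p : ℤ) ^ (sj + 1) - (p : ℤ) ^ (si + 1)) := by
    refine Dvd.dvd.mul_left ?_ _
    exact dvd_sub (pow_dvd_pow _ (by omega)) dvd_rfl
  rw [← heq] at hd1
  -- coprime to p - 1
  have hcop : IsCoprime ((p : ℤ) ^ (si + 1)) ((p : ℤ) - 1) := by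
    refine IsCoprime.pow_left ⟨1, -1, by ring⟩
  have hd2 : ((p : ℤ)) ^ (si + 1) ∣ ((mi - mj) * (p : ℤ) ^ n + (i : ℤ) - (j : ℤ)) :=
    hcop.dvd_of_dvd_mul_left hd1
  have hd3 : ((p : ℤ)) ^ (si + 1) ∣ (mi - mj) * (p : ℤ) ^ n :=
    Dvd.dvd.mul_left (pow_dvd_pow _ hsin) _
  have hd4 : ((p : ℤ)) ^ (si + 1) ∣ (i : ℤ) - (j : ℤ) := by
    have h := dvd_sub hd2 hd3
    have h2 : (mi - mj) * (p : ℤ) ^ n + (i : ℤ) - (j : ℤ) - (mi - mj) * (p : ℤ) ^ n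
        = (i : ℤ) - (j : ℤ) := by ring
    rwa [h2] at h
  have hd5 : ((p : ℤ)) ^ (si + 1) ∣ (j : ℤ) := by
    have : (p : ℤ) ^ (si + 1) ∣ (p : ℤ) ^ sj := pow_dvd_pow _ (by omega)
    refine this.trans ?_
    exact_mod_cast Int.natCast_dvd_natCast.mpr (Nat.ordProj_dvd j p)
  have hd6 : ((p : ℤ)) ^ (si + 1) ∣ (i : ℤ) := by
    have := dvd_add hd4 hd5
    simpa using this
  have : (p : ℕ) ^ (si + 1) ∣ i := by exact_mod_cast hd6
  exact Nat.pow_succ_factorization_not_dvd hi0 hp this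

theorem intkey (p e n : ℕ) (hp : p.Prime) (i j : ℕ)
    (hi1 : 1 ≤ i) (hi2 : i < p ^ n) (hj1 : 1 ≤ j) (hj2 : j < p ^ n) (mi mj : ℤ)
    (heq : ((p : ℤ) - 1) * ((mi - mj) * (p : ℤ) ^ n + (i : ℤ) - (j : ℤ)) =
      (e : ℤ) * ((p : ℤ) ^ (j.factorization p + 1) - (p : ℤ) ^ (i.factorization p + 1))) :
    i = j := by
  rcases Nat.lt_trichotomy (i.factorization p) (j.factorization p) with h | h | h
  · exact absurd heq (fun heq => intkey_aux p e n hp i j hi1 hi2 hj1 hj2 h mi mj heq)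
  · -- equal valuations: RHS = 0
    rw [h, sub_self, mul_zero] at heq
    have hp1 : ((p : ℤ) - 1) ≠ 0 := by
      have := hp.two_le; omega
    have hD : (mi - mj) * (p : ℤ) ^ n + (i : ℤ) - (j : ℤ) = 0 := by
      rcases mul_eq_zero.mp heq with h' | h'
      · exact absurd h' hp1
      · exact h'
    have hdvd : ((p : ℤ)) ^ n ∣ (i : ℤ) - (j : ℤ) := by
      refine ⟨mj - mi, by linarith [hD]⟩
    have habs : |(i : ℤ) - (j : ℤ)| < (p : ℤ) ^ n := by
      rw [abs_lt]
      constructor <;> [skip; skip] <;>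
        · have h1 : ((i : ℤ)) < (p : ℤ) ^ n := by exact_mod_cast hi2
          have h2 : ((j : ℤ)) < (p : ℤ) ^ n := by exact_mod_cast hj2
          omega
    have := Int.eq_zero_of_abs_lt_dvd hdvd habs
    omega
  · refine (intkey_aux p e n hp j i hj1 hj2 hi1 hi2 h mj mi (by linarith [heq])).elim


/-- `K` is a finite totally ramified extension of `Frac W(k)` with ramification index `e`,
encoded via a valuation `v` on an algebraic closure of `K` with `v p = 1`, `v π = 1/e` for a
uniformizer `π` of `K`, and `v(K^×) = (1/e)ℤ`.  Let `π_n` be a `p^n`-th root of `π`,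
`ζ` a primitive `p^n`-th root of unity, and `a_1, …, a_{p^n-1}` nonzero elements of `K`.
Then for `i, j ∈ {1, …, p^n - 1}`, the equality
`v (a_i π_n^i (ζ^i - 1)) = v (a_j π_n^j (ζ^j - 1))` implies `i = j`. -/
theorem stmt2 (p : ℕ) [Fact p.Prime] (K : Type) [Field K] [CharZero K]
    (e : ℕ) (he : 0 < e)
    (v : AlgebraicClosure K → EReal)
    (hv0 : v 0 = ⊤)
    (hvfin : ∀ x : AlgebraicClosure K, x ≠ 0 → v x ≠ ⊤)
    (hvbot : ∀ x : AlgebraicClosure K, v x ≠ ⊥)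
    (hvmul : ∀ x y : AlgebraicClosure K, v (x * y) = v x + v y)
    (hvadd : ∀ x y : AlgebraicClosure K, min (v x) (v y) ≤ v (x + y))
    (hvp : v ((p : ℕ) : AlgebraicClosure K) = 1)
    (π : K)
    (hπ : v (algebraMap K (AlgebraicClosure K) π) = (((e : ℝ)⁻¹ : ℝ) : EReal))
    (hdisc : ∀ y : K, y ≠ 0 →
      ∃ m : ℤ, v (algebraMap K (AlgebraicClosure K) y) = (((m : ℝ) / e : ℝ) : EReal))
    (n : ℕ) (hn : 1 ≤ n)
    (πn : AlgebraicClosure K) (hπn : πn ^ p ^ n = algebraMap K (AlgebraicClosure K) π)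
    (ζ : AlgebraicClosure K) (hζ : IsPrimitiveRoot ζ (p ^ n))
    (a : ℕ → K) (ha : ∀ i ∈ Finset.Icc 1 (p ^ n - 1), a i ≠ 0)
    (i j : ℕ) (hi : i ∈ Finset.Icc 1 (p ^ n - 1)) (hj : j ∈ Finset.Icc 1 (p ^ n - 1))
    (hij : v (algebraMap K (AlgebraicClosure K) (a i) * πn ^ i * (ζ ^ i - 1)) =
           v (algebraMap K (AlgebraicClosure K) (a j) * πn ^ j * (ζ ^ j - 1))) :
    i = j := by
  have hp : p.Prime := Fact.out
  rw [Finset.mem_Icc] at hi hj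
  have hpn1 : 1 < p ^ n := Nat.one_lt_pow (by omega) hp.one_lt
  have hi1 : 1 ≤ i := hi.1
  have hj1 : 1 ≤ j := hj.1
  have hi2 : i < p ^ n := by omega
  have hj2 : j < p ^ n := by omega
  -- basic nonvanishing
  have hπA : algebraMap K (AlgebraicClosure K) π ≠ 0 := by
    intro h; rw [h, hv0] at hπ; exact (EReal.coe_ne_top _) hπ.symm
  have hπn0 : πn ≠ 0 := by
    intro h; rw [h, zero_pow (by omega : p ^ n ≠ 0)] at hπn; exact hπA hπn.symm
  -- valuation of πn
  obtain ⟨r, hr⟩ := myv_real v hvfin hvbot πn hπn0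
  have hvπn : v πn = ((1 / ((e : ℝ) * (p : ℝ) ^ n) : ℝ) : EReal) := by
    have h1 := myv_pow v hvfin hvbot hvmul πn r hr (p ^ n)
    rw [hπn, hπ, EReal.coe_eq_coe_iff] at h1
    rw [hr, EReal.coe_eq_coe_iff]
    have hE : (e : ℝ) ≠ 0 := Nat.cast_ne_zero.mpr he.ne'
    have hP : ((p : ℝ)) ^ n ≠ 0 := pow_ne_zero n (Nat.cast_ne_zero.mpr hp.pos.ne')
    have hpn : (((p ^ n : ℕ) : ℝ)) = (p : ℝ) ^ n := by push_cast; ring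
    rw [hpn] at h1
    field_simp at h1 ⊢
    linarith
  -- valuation of ζ^i - 1 for each index
  have hzval : ∀ l : ℕ, 1 ≤ l → l < p ^ n →
      v (ζ ^ l - 1) = ((1 / (((p ^ (n - l.factorization p)).totient : ℝ)) : ℝ) : EReal) := by
    intro l hl1 hl2
    set s := l.factorization p with hs
    have hl0 : l ≠ 0 := by omega
    have hsn : s < n := by
      have h1 : p ^ s ∣ l := Nat.ordProj_dvd l p
      have h2 : p ^ s ≤ l := Nat.le_of_dvd (by omega) h1
      exact (pow_lt_pow_iff_right₀ hp.one_lt).mp (lt_of_le_of_lt h2 hl2)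
    have hprim : IsPrimitiveRoot (ζ ^ l) (p ^ (n - s)) := by
      have h1 : IsPrimitiveRoot (ζ ^ (p ^ s)) (p ^ (n - s)) := by
        refine hζ.pow (pow_pos hp.pos n) ?_
        rw [← pow_add]; congr 1; omega
      have h2 := h1.pow_of_coprime (l / p ^ s)
        ((Nat.coprime_ordCompl hp hl0).symm.pow_right _)
      rwa [← pow_mul, Nat.ordProj_mul_ordCompl_eq_self] at h2
    have := myv_primroot v hv0 hvfin hvbot hvmul hvadd p (n - s) (by omega) hvp (ζ ^ l) hprim
    rw [← this, ← myv_neg v hvfin hvbot hvmul (1 - ζ ^ l)]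
    ring_nf
  -- valuations of the a's
  obtain ⟨mi, hmi⟩ := hdisc (a i) (ha i (Finset.mem_Icc.mpr hi))
  obtain ⟨mj, hmj⟩ := hdisc (a j) (ha j (Finset.mem_Icc.mpr hj))
  -- expand hij
  have hexp : ∀ (l : ℕ) (m : ℤ), 1 ≤ l → l < p ^ n →
      v (algebraMap K (AlgebraicClosure K) (a l)) = (((m : ℝ) / e : ℝ) : EReal) →
      v (algebraMap K (AlgebraicClosure K) (a l) * πn ^ l * (ζ ^ l - 1)) =
        ((((m : ℝ) / e + (l : ℝ) * (1 / ((e : ℝ) * (p : ℝ) ^ n))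
          + 1 / (((p ^ (n - l.factorization p)).totient : ℝ)) : ℝ)) : EReal) := by
    intro l m hl1 hl2 hm
    rw [hvmul, hvmul, hm, myv_pow v hvfin hvbot hvmul πn _ hvπn l, hzval l hl1 hl2,
      ← EReal.coe_add, ← EReal.coe_add]
  rw [hexp i mi hi1 hi2 hmi, hexp j mj hj1 hj2 hmj, EReal.coe_eq_coe_iff] at hij
  -- translate to the integer equation
  set si := i.factorization p with hsi
  set sj := j.factorization p with hsj
  have hsin : si < n := by
    have h2 : p ^ si ≤ i := Nat.le_of_dvd (by omega) (Nat.ordProj_dvd i p)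
    exact (pow_lt_pow_iff_right₀ hp.one_lt).mp (lt_of_le_of_lt h2 hi2)
  have hsjn : sj < n := by
    have h2 : p ^ sj ≤ j := Nat.le_of_dvd (by omega) (Nat.ordProj_dvd j p)
    exact (pow_lt_pow_iff_right₀ hp.one_lt).mp (lt_of_le_of_lt h2 hj2)
  have hE : (e : ℝ) ≠ 0 := Nat.cast_ne_zero.mpr he.ne'
  have hP0 : (p : ℝ) ≠ 0 := Nat.cast_ne_zero.mpr hp.pos.ne'
  have hP1 : (p : ℝ) - 1 ≠ 0 := by
    have := hp.two_le
    have : (2 : ℝ) ≤ (p : ℝ) := by exact_mod_cast this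
    linarith
  have htotval : ∀ s : ℕ, s < n →
      (((p ^ (n - s)).totient : ℝ)) = (p : ℝ) ^ (n - s - 1) * ((p : ℝ) - 1) := by
    intro s hsn
    rw [Nat.totient_prime_pow hp (by omega)]
    push_cast [Nat.cast_sub hp.one_le]
    ring
  have hsplit : ∀ s : ℕ, s < n → ((p : ℝ)) ^ n = (p : ℝ) ^ (n - s - 1) * (p : ℝ) ^ (s + 1) := by
    intro s hsn
    rw [← pow_add]; congr 1; omega
  have hterm : ∀ s : ℕ, s < n →
      (e : ℝ) * (p : ℝ) ^ n * ((p : ℝ) - 1) / (((p ^ (n - s)).totient : ℝ))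
        = (e : ℝ) * (p : ℝ) ^ (s + 1) := by
    intro s hsn
    rw [htotval s hsn, hsplit s hsn]
    have h1 : ((p : ℝ)) ^ (n - s - 1) ≠ 0 := pow_ne_zero _ hP0
    field_simp
  have hreal : ((p : ℝ) - 1) * (((mi : ℝ) - (mj : ℝ)) * (p : ℝ) ^ n + (i : ℝ) - (j : ℝ))
      = (e : ℝ) * ((p : ℝ) ^ (sj + 1) - (p : ℝ) ^ (si + 1)) := by
    have h1 : ((mi : ℝ) / e + (i : ℝ) * (1 / ((e : ℝ) * (p : ℝ) ^ n))
          + 1 / (((p ^ (n - si)).totient : ℝ))) * ((e : ℝ) * (p : ℝ) ^ n * ((p : ℝ) - 1))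
        = ((mj : ℝ) / e + (j : ℝ) * (1 / ((e : ℝ) * (p : ℝ) ^ n))
          + 1 / (((p ^ (n - sj)).totient : ℝ))) * ((e : ℝ) * (p : ℝ) ^ n * ((p : ℝ) - 1)) := by
      rw [hij]
    have hPn : ((p : ℝ)) ^ n ≠ 0 := pow_ne_zero _ hP0
    have hL : ∀ (m : ℝ) (l s : ℕ), s < n →
        ((m : ℝ) / e + (l : ℝ) * (1 / ((e : ℝ) * (p : ℝ) ^ n))
          + 1 / (((p ^ (n - s)).totient : ℝ))) * ((e : ℝ) * (p : ℝ) ^ n * ((p : ℝ) - 1))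
        = m * (p : ℝ) ^ n * ((p : ℝ) - 1) + (l : ℝ) * ((p : ℝ) - 1)
          + (e : ℝ) * (p : ℝ) ^ (s + 1) := by
      intro m l s hsn
      rw [add_mul, add_mul]
      congr 1
      · congr 1
        · field_simp
        · field_simp
      · rw [← hterm s hsn]; field_simp
    rw [hL _ i si hsin, hL _ j sj hsjn] at h1
    linarith
  have hint : ((p : ℤ) - 1) * ((mi - mj) * (p : ℤ) ^ n + (i : ℤ) - (j : ℤ))
      = (e : ℤ) * ((p : ℤ) ^ (sj + 1) - (p : ℤ) ^ (si + 1)) := by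
    have := hreal
    exact_mod_cast this
  exact intkey p e n hp i j hi1 hi2 hj1 hj2 mi mj hint
end cyclo
end

section
/- Let K be a finite totally ramified extension of F = Frac W(k), π a uniformizer of K, and π_n a p^n-th root of π. Write x = Σ_{i=0}^{p^n - 1} a_i π_n^i with a_i ∈ K, and let σ be an element of Gal(K̄/K) with σ(π_n) = ζ π_n for ζ a primitive p^n-th root of unity. Then v(σx - x) = min_{1 ≤ i ≤ p^n - 1} ( v(a_i) + i/(e p^n) + p^{v_p(i)} / (p^{n-1}(p-1)) ). -/
set_option linter.unusedSectionVars false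
section Aux
variable {A : Type*} [Field A] {ι : Type*} (v : A → EReal)
  (hv0 : v 0 = ⊤)
  (hvfin : ∀ x : A, x ≠ 0 → v x ≠ ⊤)
  (hvbot : ∀ x : A, v x ≠ ⊥)
  (hvmul : ∀ x y : A, v (x * y) = v x + v y)
  (hvadd : ∀ x y : A, min (v x) (v y) ≤ v (x + y))

include hvfin hvbot hvmul

lemma vone : v 1 = 0 := by
  have h := hvmul 1 1
  rw [mul_one] at h
  have h1 : v 1 = ((v 1).toReal : EReal) := (EReal.coe_toReal (hvfin 1 one_ne_zero) (hvbot 1)).symm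
  rw [h1, ← EReal.coe_add, EReal.coe_eq_coe_iff] at h
  have : (v 1).toReal = 0 := by linarith
  rw [h1, this, EReal.coe_zero]

lemma vneg (x : A) : v (-x) = v x := by
  have hm1 : v (-1 : A) = 0 := by
    have h := hvmul (-1) (-1)
    rw [neg_mul_neg, one_mul, vone v hvfin hvbot hvmul] at h
    have h1 : v (-1 : A) = ((v (-1 : A)).toReal : EReal) :=
      (EReal.coe_toReal (hvfin _ (neg_ne_zero.mpr one_ne_zero)) (hvbot _)).symm
    rw [h1, ← EReal.coe_add] at h
    have : (v (-1 : A)).toReal = 0 := by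
      have := EReal.coe_eq_coe_iff.mp (by rw [← h]; rfl : ((((v (-1:A)).toReal + (v (-1:A)).toReal : ℝ)) : EReal) = ((0:ℝ) : EReal))
      linarith
    rw [h1, this, EReal.coe_zero]
  have := hvmul (-1) x
  rw [neg_one_mul, hm1, zero_add] at this
  exact this

include hvadd in
lemma vadd_ne {x y : A} (h : v x ≠ v y) : v (x + y) = min (v x) (v y) := by
  wlog hlt : v x < v y generalizing x y
  · rw [add_comm, min_comm]
    exact this h.symm ((h.lt_or_gt).resolve_left hlt)
  rw [min_eq_left hlt.le]
  have hle : v x ≤ v (x + y) := by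
    have := hvadd x y
    rwa [min_eq_left hlt.le] at this
  have hge : v (x + y) ≤ v x := by
    have h2 := hvadd (x + y) (-y)
    rw [vneg v hvfin hvbot hvmul, show x + y + -y = x by ring] at h2
    rcases min_le_iff.mp h2 with h3 | h3
    · exact h3
    · exact absurd h3 (not_le.mpr hlt)
  exact le_antisymm hge hle

include hv0 hvadd in
lemma vsum_ge (s : Finset ι) (f : ι → A) (b : EReal) (hb : ∀ i ∈ s, b ≤ v (f i)) :
    b ≤ v (∑ i ∈ s, f i) := by
  induction s using Finset.cons_induction with
  | empty => simp [hv0]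
  | cons a s ha ih =>
      rw [Finset.sum_cons]
      refine le_trans (le_min (hb a (Finset.mem_cons_self a _)) (ih fun i hi => hb i (Finset.mem_cons_of_mem hi))) (hvadd _ _)

lemma vprod (s : Finset ι) (f : ι → A) : v (∏ i ∈ s, f i) = ∑ i ∈ s, v (f i) := by
  induction s using Finset.cons_induction with
  | empty => simpa using vone v hvfin hvbot hvmul
  | cons a s ha ih => rw [Finset.prod_cons, Finset.sum_cons, hvmul, ih]

lemma vpow {x : A} {r : ℝ} (hx : v x = (r : EReal)) (k : ℕ) :
    v (x ^ k) = (((k : ℝ) * r : ℝ) : EReal) := by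
  induction k with
  | zero => simpa using vone v hvfin hvbot hvmul
  | succ k ih =>
      rw [pow_succ, hvmul, ih, hx, ← EReal.coe_add, EReal.coe_eq_coe_iff]
      push_cast; ring

include hv0 hvadd in
lemma vsum_eq_inf (s : Finset ι) (f : ι → A) (hne : ∀ i ∈ s, f i ≠ 0)
    (hd : ∀ i ∈ s, ∀ j ∈ s, i ≠ j → v (f i) ≠ v (f j)) :
    v (∑ i ∈ s, f i) = s.inf (fun i => v (f i)) := by
  induction s using Finset.cons_induction with
  | empty => simp [hv0]
  | cons a s ha ih =>
      have hs : v (∑ i ∈ s, f i) = s.inf (fun i => v (f i)) :=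
        ih (fun i hi => hne i (Finset.mem_cons_of_mem hi))
          (fun i hi j hj hij => hd i (Finset.mem_cons_of_mem hi) j (Finset.mem_cons_of_mem hj) hij)
      have hne' : v (f a) ≠ v (∑ i ∈ s, f i) := by
        rcases s.eq_empty_or_nonempty with rfl | hsne
        · simpa [hv0] using hvfin _ (hne a (Finset.mem_cons_self a _))
        · obtain ⟨i0, hi0, h0⟩ := Finset.exists_mem_eq_inf s hsne (fun i => v (f i))
          rw [hs, h0]
          exact hd a (Finset.mem_cons_self a _) i0 (Finset.mem_cons_of_mem hi0)
            (fun h => ha (h ▸ hi0))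
      rw [Finset.sum_cons, vadd_ne v hvfin hvbot hvmul hvadd hne', hs, Finset.inf_cons]

lemma ereal_coe_sum (s : Finset ι) (f : ι → ℝ) :
    ((∑ i ∈ s, f i : ℝ) : EReal) = ∑ i ∈ s, ((f i : ℝ) : EReal) := by
  induction s using Finset.cons_induction with
  | empty => simp
  | cons a s ha ih => rw [Finset.sum_cons, Finset.sum_cons, EReal.coe_add, ih]

end Aux

lemma vroot {A : Type*} [Field A] [IsDomain A] (v : A → EReal)
    (hv0 : v 0 = ⊤)
    (hvfin : ∀ x : A, x ≠ 0 → v x ≠ ⊤)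
    (hvbot : ∀ x : A, v x ≠ ⊥)
    (hvmul : ∀ x y : A, v (x * y) = v x + v y)
    (hvadd : ∀ x y : A, min (v x) (v y) ≤ v (x + y))
    (p m : ℕ) (hp : p.Prime) (hvp : v ((p : ℕ) : A) = 1)
    (ω : A) (hω : IsPrimitiveRoot ω (p ^ (m+1))) :
    v (1 - ω) = ((1 / ((p : ℝ) ^ m * ((p : ℝ) - 1)) : ℝ) : EReal) := by
  haveI : Fact p.Prime := ⟨hp⟩
  haveI : NeZero (p ^ (m+1)) := ⟨pow_ne_zero _ hp.pos.ne'⟩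
  have hN0 : p ^ (m+1) ≠ 0 := pow_ne_zero _ hp.pos.ne'
  -- roots of unity have valuation 0
  have hvz : ∀ x : A, x ^ (p ^ (m+1)) = 1 → v x = ((0 : ℝ) : EReal) := by
    intro x hx
    have hx0 : x ≠ 0 := by
      intro h; rw [h, zero_pow hN0] at hx; exact zero_ne_one hx
    have hr : v x = (((v x).toReal : ℝ) : EReal) :=
      (EReal.coe_toReal (hvfin x hx0) (hvbot x)).symm
    have hpw := vpow v hvfin hvbot hvmul hr (p ^ (m+1))
    rw [hx, vone v hvfin hvbot hvmul] at hpw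
    have h0 : (((p ^ (m+1) : ℕ) : ℝ) * (v x).toReal : ℝ) = (0 : ℝ) := by
      have := hpw.symm.trans (EReal.coe_zero.symm ▸ rfl : ((0:ℝ) : EReal) = ((0:ℝ):EReal))
      exact EReal.coe_eq_coe_iff.mp (by rw [← hpw]; exact EReal.coe_zero.symm ▸ rfl)
    have hNR : ((p ^ (m+1) : ℕ) : ℝ) ≠ 0 := Nat.cast_ne_zero.mpr hN0
    have : (v x).toReal = 0 := by
      rcases mul_eq_zero.mp h0 with h | h
      · exact absurd h hNR
      · exact h
    rw [hr, this]
  -- monotonicity: primitive root difference has minimal valuation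
  have hmono : ∀ ω' : A, IsPrimitiveRoot ω' (p ^ (m+1)) → ∀ x : A, x ^ (p ^ (m+1)) = 1 →
      v (1 - ω') ≤ v (1 - x) := by
    intro ω' hω' x hx
    obtain ⟨t, -, rfl⟩ := hω'.eq_pow_of_pow_eq_one hx
    have hgeom : 1 - ω' ^ t = (∑ j ∈ Finset.range t, ω' ^ j) * (1 - ω') := by
      have h := geom_sum_mul ω' t
      linear_combination h
    rw [hgeom, hvmul]
    have hsum : (0 : EReal) ≤ v (∑ j ∈ Finset.range t, ω' ^ j) := by
      apply vsum_ge v hv0 hvfin hvbot hvmul hvadd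
      intro j hj
      have := vpow v hvfin hvbot hvmul (hvz ω' hω'.pow_eq_one) j
      rw [this]
      simp
    calc v (1 - ω') = 0 + v (1 - ω') := (zero_add _).symm
      _ ≤ v (∑ j ∈ Finset.range t, ω' ^ j) + v (1 - ω') := add_le_add hsum le_rfl
  have hall : ∀ μ ∈ primitiveRoots (p ^ (m+1)) A, v (1 - μ) = v (1 - ω) := by
    intro μ hμ
    have hμp : IsPrimitiveRoot μ (p ^ (m+1)) := (mem_primitiveRoots (Nat.pos_of_ne_zero hN0)).mp hμ
    exact le_antisymm (hmono μ hμp ω hω.pow_eq_one) (hmono ω hω μ hμp.pow_eq_one)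
  have hprod : ∏ μ ∈ primitiveRoots (p ^ (m+1)) A, (1 - μ) = ((p : ℕ) : A) := by
    have h1 := Polynomial.cyclotomic_eq_prod_X_sub_primitiveRoots hω
    have h2 : Polynomial.eval 1 (Polynomial.cyclotomic (p ^ (m+1)) A) = ((p : ℕ) : A) :=
      Polynomial.eval_one_cyclotomic_prime_pow m
    rw [h1, Polynomial.eval_prod] at h2
    simpa using h2
  have hω1 : (1 : A) - ω ≠ 0 := by
    have : ω ≠ 1 := hω.ne_one (one_lt_pow₀ hp.one_lt (Nat.succ_ne_zero m))
    exact sub_ne_zero.mpr (Ne.symm this)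
  have hr : v (1 - ω) = (((v (1 - ω)).toReal : ℝ) : EReal) :=
    (EReal.coe_toReal (hvfin _ hω1) (hvbot _)).symm
  set r : ℝ := (v (1 - ω)).toReal with hrdef
  have hS : v ((p : ℕ) : A) =
      ((((primitiveRoots (p ^ (m+1)) A).card : ℝ) * r : ℝ) : EReal) := by
    rw [← hprod, vprod v hvfin hvbot hvmul]
    rw [Finset.sum_congr rfl (fun μ hμ => (hall μ hμ).trans hr)]
    rw [← ereal_coe_sum v hvfin hvbot hvmul, Finset.sum_const, nsmul_eq_mul]
  have hcard : (primitiveRoots (p ^ (m+1)) A).card = p ^ m * (p - 1) := by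
    rw [hω.card_primitiveRoots, Nat.totient_prime_pow hp (Nat.succ_pos m)]
    simp
  rw [hvp] at hS
  have h1E : (1 : EReal) = ((1 : ℝ) : EReal) := by norm_num
  rw [h1E] at hS
  have hreal : (1 : ℝ) = ((primitiveRoots (p ^ (m+1)) A).card : ℝ) * r :=
    EReal.coe_eq_coe_iff.mp hS
  rw [hcard] at hreal
  have hpge : (1 : ℝ) ≤ (p : ℝ) := by exact_mod_cast hp.one_le
  have hcastc : ((p ^ m * (p - 1) : ℕ) : ℝ) = (p : ℝ) ^ m * ((p : ℝ) - 1) := by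
    push_cast [Nat.cast_sub hp.one_le]
    ring
  rw [hcastc] at hreal
  have hne : (p : ℝ) ^ m * ((p : ℝ) - 1) ≠ 0 := by
    have h2 : (1 : ℝ) < (p : ℝ) := by exact_mod_cast hp.one_lt
    have hx : (p:ℝ) ^ m ≠ 0 := by positivity
    exact mul_ne_zero hx (sub_ne_zero.mpr h2.ne')
  have : r = 1 / ((p : ℝ) ^ m * ((p : ℝ) - 1)) := by
    rw [eq_div_iff hne]
    linear_combination hreal.symm
  rw [hr, this]

lemma key_aux (p e n : ℕ) (hp : p.Prime) (he : 0 < e) (hn : 1 ≤ n)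
    (i j : ℕ) (hi1 : 1 ≤ i) (hi2 : i < p ^ n) (hj1 : 1 ≤ j) (hj2 : j < p ^ n)
    (hij : i ≠ j) (hle : padicValNat p i ≤ padicValNat p j)
    (mi mj : ℤ)
    (heq : (mi : ℝ) / e + (i : ℝ) / (e * p ^ n)
          + (p : ℝ) ^ padicValNat p i / ((p : ℝ) ^ (n - 1) * ((p : ℝ) - 1))
        = (mj : ℝ) / e + (j : ℝ) / (e * p ^ n)
          + (p : ℝ) ^ padicValNat p j / ((p : ℝ) ^ (n - 1) * ((p : ℝ) - 1))) : False := by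
  haveI : Fact p.Prime := ⟨hp⟩
  set vi := padicValNat p i with hvi_def
  set vj := padicValNat p j with hvj_def
  have hvi : vi < n := by
    have h1 : p ^ vi ≤ i := Nat.le_of_dvd (by omega) pow_padicValNat_dvd
    have : p ^ vi < p ^ n := lt_of_le_of_lt h1 hi2
    exact (Nat.pow_lt_pow_iff_right hp.one_lt).mp this
  have hvj : vj < n := by
    have h1 : p ^ vj ≤ j := Nat.le_of_dvd (by omega) pow_padicValNat_dvd
    have : p ^ vj < p ^ n := lt_of_le_of_lt h1 hj2
    exact (Nat.pow_lt_pow_iff_right hp.one_lt).mp this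
  have hpR : (1 : ℝ) < p := by exact_mod_cast hp.one_lt
  have he0 : (e : ℝ) ≠ 0 := by positivity
  have hp0 : (p : ℝ) ≠ 0 := by positivity
  have hpm1 : (p : ℝ) - 1 ≠ 0 := sub_ne_zero.mpr hpR.ne'
  have hn' : n - 1 + 1 = n := Nat.succ_pred_eq_of_pos hn
  have hpe : (p : ℝ) ^ n = (p : ℝ) ^ (n - 1) * p := by rw [← pow_succ, hn']
  have hpn1 : ((p : ℝ) ^ (n-1)) ≠ 0 := by positivity
  have hcast : ∀ (m : ℤ) (k vk : ℕ),
      ((m * (p:ℤ) ^ n * ((p:ℤ) - 1) + (k:ℤ) * ((p:ℤ) - 1) + (e:ℤ) * (p:ℤ) ^ (vk+1) : ℤ) : ℝ)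
        = ((e:ℝ) * (p:ℝ) ^ n * ((p:ℝ) - 1)) *
          ((m : ℝ) / e + (k : ℝ) / (e * p ^ n)
            + (p : ℝ) ^ vk / ((p : ℝ) ^ (n - 1) * ((p : ℝ) - 1))) := by
    intro m k vk
    push_cast
    rw [hpe]
    field_simp
    ring
  have hcastij : ((mi * (p:ℤ) ^ n * ((p:ℤ) - 1) + (i:ℤ) * ((p:ℤ) - 1) + (e:ℤ) * (p:ℤ) ^ (vi+1) : ℤ) : ℝ)
      = ((mj * (p:ℤ) ^ n * ((p:ℤ) - 1) + (j:ℤ) * ((p:ℤ) - 1) + (e:ℤ) * (p:ℤ) ^ (vj+1) : ℤ) : ℝ) := by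
    rw [hcast mi i vi, hcast mj j vj, heq]
  have heqZ : mi * (p:ℤ) ^ n * ((p:ℤ) - 1) + (i:ℤ) * ((p:ℤ) - 1) + (e:ℤ) * (p:ℤ) ^ (vi+1)
      = mj * (p:ℤ) ^ n * ((p:ℤ) - 1) + (j:ℤ) * ((p:ℤ) - 1) + (e:ℤ) * (p:ℤ) ^ (vj+1) :=
    Int.cast_injective hcastij
  have hQ : ((p:ℤ) - 1) ≠ 0 := by
    have := hp.one_lt; omega
  rcases eq_or_lt_of_le hle with heqv | hlt
  · rw [← heqv] at heqZ
    have h2 : ((i:ℤ) - j) * ((p:ℤ) - 1) = ((mj - mi) * (p:ℤ) ^ n) * ((p:ℤ) - 1) := by ring_nf; linarith [heqZ]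
    have h3 : (i:ℤ) - j = (mj - mi) * (p:ℤ) ^ n := mul_right_cancel₀ hQ h2
    have hdvd : ((p:ℤ) ^ n) ∣ ((i:ℤ) - j) := h3 ▸ dvd_mul_left _ _
    have hi2' : (i:ℤ) < (p:ℤ) ^ n := by exact_mod_cast hi2
    have hj2' : (j:ℤ) < (p:ℤ) ^ n := by exact_mod_cast hj2
    have habs : |(i:ℤ) - j| < (p:ℤ) ^ n := by
      rw [abs_lt]
      constructor <;> [linarith [(by exact_mod_cast hj1 : (1:ℤ) ≤ j)]; linarith [(by exact_mod_cast hi1 : (1:ℤ) ≤ i)]]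
    have := Int.eq_zero_of_abs_lt_dvd hdvd habs
    have : (i : ℤ) = j := by omega
    exact hij (by exact_mod_cast this)
  · have h1 : (p:ℤ) ^ (n - (vi+1)) * (p:ℤ) ^ (vi+1) = (p:ℤ) ^ n := by
      rw [← pow_add]; congr 1; omega
    have h2 : (p:ℤ) ^ (vj - vi) * (p:ℤ) ^ (vi+1) = (p:ℤ) ^ (vj+1) := by
      rw [← pow_add]; congr 1; omega
    have hrearr : ((i:ℤ) - j) * ((p:ℤ) - 1)
        = ((mj - mi) * (p:ℤ) ^ (n - (vi+1)) * ((p:ℤ) - 1)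
          + (e:ℤ) * ((p:ℤ) ^ (vj - vi) - 1)) * (p:ℤ) ^ (vi+1) := by
      linear_combination heqZ - (mj - mi) * ((p:ℤ) - 1) * h1 - (e:ℤ) * h2
    have hdvd1 : ((p:ℤ) ^ (vi+1)) ∣ ((i:ℤ) - j) * ((p:ℤ) - 1) :=
      ⟨(mj - mi) * (p:ℤ) ^ (n - (vi+1)) * ((p:ℤ) - 1) + (e:ℤ) * ((p:ℤ) ^ (vj - vi) - 1),
        by rw [hrearr]; ring⟩
    have hcop : IsCoprime ((p:ℤ) ^ (vi+1)) ((p:ℤ) - 1) :=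
      IsCoprime.pow_left (⟨1, -1, by ring⟩ : IsCoprime ((p:ℤ)) ((p:ℤ) - 1))
    have hdvd2 : ((p:ℤ) ^ (vi+1)) ∣ ((i:ℤ) - j) := hcop.dvd_of_dvd_mul_right hdvd1
    have hdvdjN : p ^ (vi+1) ∣ j := (pow_dvd_pow p hlt).trans pow_padicValNat_dvd
    have hdvdj : ((p:ℤ) ^ (vi+1)) ∣ (j:ℤ) := by exact_mod_cast Int.natCast_dvd_natCast.mpr hdvdjN
    have hdvdi : ((p:ℤ) ^ (vi+1)) ∣ (i:ℤ) := by
      have := dvd_add hdvd2 hdvdj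
      simpa using this
    have hdvdiN : p ^ (vi+1) ∣ i := by exact_mod_cast hdvdi
    exact pow_succ_padicValNat_not_dvd (show i ≠ 0 by omega) hdvdiN


open scoped Classical

/-- Setting: `K` finite totally ramified over `Frac W(k)` with index `e`, encoded by a
valuation `v` on an algebraic closure of `K` with `v p = 1`, `v π = 1/e`, `v(K^×) = (1/e)ℤ`.
Let `π_n^{p^n} = π`, `x = Σ_{i=0}^{p^n-1} a_i π_n^i` with `a_i ∈ K`, and `σ ∈ Gal(K̄/K)`
with `σ π_n = ζ π_n` for `ζ` a primitive `p^n`-th root of unity.  Then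
`v (σ x - x) = min_{1 ≤ i ≤ p^n - 1, a_i ≠ 0} ( v a_i + i/(e p^n) + p^{v_p i}/(p^{n-1}(p-1)) )`
(the `min`, as a `Finset.inf` in `EReal`, being `⊤` when no such index exists). -/
theorem stmt3 (p : ℕ) [Fact p.Prime] (K : Type) [Field K] [CharZero K]
    (e : ℕ) (he : 0 < e)
    (v : AlgebraicClosure K → EReal)
    (hv0 : v 0 = ⊤)
    (hvfin : ∀ x : AlgebraicClosure K, x ≠ 0 → v x ≠ ⊤)
    (hvbot : ∀ x : AlgebraicClosure K, v x ≠ ⊥)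
    (hvmul : ∀ x y : AlgebraicClosure K, v (x * y) = v x + v y)
    (hvadd : ∀ x y : AlgebraicClosure K, min (v x) (v y) ≤ v (x + y))
    (hvp : v ((p : ℕ) : AlgebraicClosure K) = 1)
    (π : K)
    (hπ : v (algebraMap K (AlgebraicClosure K) π) = (((e : ℝ)⁻¹ : ℝ) : EReal))
    (hdisc : ∀ y : K, y ≠ 0 →
      ∃ m : ℤ, v (algebraMap K (AlgebraicClosure K) y) = (((m : ℝ) / e : ℝ) : EReal))
    (n : ℕ) (hn : 1 ≤ n)
    (πn : AlgebraicClosure K) (hπn : πn ^ p ^ n = algebraMap K (AlgebraicClosure K) π)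
    (ζ : AlgebraicClosure K) (hζ : IsPrimitiveRoot ζ (p ^ n))
    (σ : AlgebraicClosure K ≃ₐ[K] AlgebraicClosure K) (hσ : σ πn = ζ * πn)
    (a : ℕ → K)
    (x : AlgebraicClosure K)
    (hx : x = ∑ i ∈ Finset.range (p ^ n),
      algebraMap K (AlgebraicClosure K) (a i) * πn ^ i) :
    v (σ x - x) =
      (((Finset.Icc 1 (p ^ n - 1)).filter (fun i => a i ≠ 0)).inf
        (fun i => v (algebraMap K (AlgebraicClosure K) (a i)) +
          (((i : ℝ) / (e * p ^ n) : ℝ) : EReal) +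
          ((((p : ℝ) ^ padicValNat p i) / ((p : ℝ) ^ (n - 1) * ((p : ℝ) - 1)) : ℝ) : EReal))) := by
  classical
  have hp : p.Prime := Fact.out
  have hppow0 : p ^ n ≠ 0 := pow_ne_zero _ hp.pos.ne'
  have hppowpos : 0 < p ^ n := Nat.pos_of_ne_zero hppow0
  have hφπ0 : algebraMap K (AlgebraicClosure K) π ≠ 0 := by
    intro h
    have h2 := hπ
    rw [h, hv0] at h2
    exact EReal.coe_ne_top _ h2.symm
  have hπn0 : πn ≠ 0 := by
    intro h
    apply hφπ0
    rw [← hπn, h, zero_pow hppow0]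
  have hπnfin : v πn = (((v πn).toReal : ℝ) : EReal) :=
    (EReal.coe_toReal (hvfin πn hπn0) (hvbot πn)).symm
  set c : ℝ := (v πn).toReal with hcdef
  have hcpow := vpow v hvfin hvbot hvmul hπnfin (p ^ n)
  rw [hπn, hπ] at hcpow
  have hcreal : ((e : ℝ))⁻¹ = ((p ^ n : ℕ) : ℝ) * c := EReal.coe_eq_coe_iff.mp hcpow
  have he0 : (e : ℝ) ≠ 0 := Nat.cast_ne_zero.mpr he.ne'
  have hpn0 : ((p : ℝ)) ^ n ≠ 0 := pow_ne_zero _ (Nat.cast_ne_zero.mpr hp.pos.ne')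
  have hc : c = ((e : ℝ) * (p : ℝ) ^ n)⁻¹ := by
    push_cast at hcreal
    field_simp at hcreal ⊢
    linarith
  set T := (Finset.Icc 1 (p ^ n - 1)).filter (fun i => a i ≠ 0) with hTdef
  set g : ℕ → AlgebraicClosure K := fun i => algebraMap K (AlgebraicClosure K) (a i) * πn ^ i * (ζ ^ i - 1) with hgdef
  have hσx : σ x - x = ∑ i ∈ Finset.range (p ^ n), g i := by
    rw [hx, map_sum, ← Finset.sum_sub_distrib]
    apply Finset.sum_congr rfl
    intro i hi
    rw [map_mul, map_pow, hσ, AlgEquiv.commutes, mul_pow]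
    simp only [hgdef]
    ring
  have hsub : T ⊆ Finset.range (p ^ n) := by
    intro i hi
    rw [hTdef, Finset.mem_filter, Finset.mem_Icc] at hi
    rw [Finset.mem_range]
    omega
  have hrestrict : ∑ i ∈ Finset.range (p ^ n), g i = ∑ i ∈ T, g i := by
    symm
    apply Finset.sum_subset hsub
    intro i hi hiT
    by_cases hai : a i = 0
    · simp [hgdef, hai]
    · have hIcc : i ∉ Finset.Icc 1 (p ^ n - 1) := by
        intro h
        exact hiT (Finset.mem_filter.mpr ⟨h, hai⟩)
      have hi0 : i = 0 := by
        rw [Finset.mem_Icc] at hIcc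
        have := Finset.mem_range.mp hi
        omega
      simp [hgdef, hi0]
  have hKinj : Function.Injective (algebraMap K (AlgebraicClosure K)) := (algebraMap K (AlgebraicClosure K)).injective
  have hmemT : ∀ i ∈ T, 1 ≤ i ∧ i < p ^ n ∧ a i ≠ 0 := by
    intro i hi
    rw [hTdef, Finset.mem_filter, Finset.mem_Icc] at hi
    exact ⟨hi.1.1, by omega, hi.2⟩
  have hne : ∀ i ∈ T, g i ≠ 0 := by
    intro i hi
    obtain ⟨hi1, hi2, hai⟩ := hmemT i hi
    refine mul_ne_zero (mul_ne_zero ?_ (pow_ne_zero _ hπn0)) ?_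
    · intro h
      exact hai (hKinj (by rw [h, map_zero]))
    · exact sub_ne_zero.mpr (hζ.pow_ne_one_of_pos_of_lt (by omega) hi2)
  have hDi : ∀ i ∈ T, v (ζ ^ i - 1) =
      ((((p : ℝ) ^ padicValNat p i) / ((p : ℝ) ^ (n - 1) * ((p : ℝ) - 1)) : ℝ) : EReal) := by
    intro i hi
    obtain ⟨hi1, hi2, hai⟩ := hmemT i hi
    set vi := padicValNat p i with hvidef
    have hvin : vi < n := by
      have h1 : p ^ vi ≤ i := Nat.le_of_dvd (by omega) pow_padicValNat_dvd
      exact (Nat.pow_lt_pow_iff_right hp.one_lt).mp (lt_of_le_of_lt h1 hi2)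
    have hu : p ^ vi * (i / p ^ vi) = i := Nat.mul_div_cancel' pow_padicValNat_dvd
    have hpu : ¬ p ∣ (i / p ^ vi) := by
      intro hd
      obtain ⟨t, ht⟩ := hd
      have hdd : p ^ (vi + 1) ∣ i := ⟨t, by rw [← hu, ht, pow_succ]; ring⟩
      exact pow_succ_padicValNat_not_dvd (by omega) hdd
    have hprim1 : IsPrimitiveRoot (ζ ^ (p ^ vi)) (p ^ (n - vi)) :=
      hζ.pow hppowpos (by rw [← pow_add]; congr 1; omega)
    have hζi : ζ ^ i = (ζ ^ p ^ vi) ^ (i / p ^ vi) := by rw [← pow_mul, hu]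
    have hprim : IsPrimitiveRoot (ζ ^ i) (p ^ (n - vi)) := by
      rw [hζi]
      exact hprim1.pow_of_coprime _
        ((Nat.coprime_comm.mp ((Nat.Prime.coprime_iff_not_dvd hp).mpr hpu)).pow_right _)
    have hnv : p ^ (n - vi) = p ^ ((n - vi - 1) + 1) := by congr 1; omega
    rw [hnv] at hprim
    have hvr := vroot v hv0 hvfin hvbot hvmul hvadd p (n - vi - 1) hp hvp (ζ ^ i) hprim
    rw [show ζ ^ i - 1 = -(1 - ζ ^ i) by ring, vneg v hvfin hvbot hvmul, hvr,
      EReal.coe_eq_coe_iff]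
    have hsplit : (p : ℝ) ^ (n - 1) = (p : ℝ) ^ (n - vi - 1) * (p : ℝ) ^ vi := by
      rw [← pow_add]; congr 1; omega
    have hp0R : (p : ℝ) ≠ 0 := Nat.cast_ne_zero.mpr hp.pos.ne'
    have hp1R : (1 : ℝ) < (p : ℝ) := by exact_mod_cast hp.one_lt
    have hpm1 : (p : ℝ) - 1 ≠ 0 := sub_ne_zero.mpr hp1R.ne'
    rw [hsplit]
    have h1 : (p:ℝ) ^ (n - vi - 1) ≠ 0 := pow_ne_zero _ hp0R
    have h2 : (p:ℝ) ^ vi ≠ 0 := pow_ne_zero _ hp0R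
    field_simp
  have hval : ∀ i ∈ T, v (g i) =
      v (algebraMap K (AlgebraicClosure K) (a i)) + (((i : ℝ) * c : ℝ) : EReal) + v (ζ ^ i - 1) := by
    intro i hi
    simp only [hgdef]
    rw [hvmul, hvmul, vpow v hvfin hvbot hvmul hπnfin i]
  have hdist : ∀ i ∈ T, ∀ j ∈ T, i ≠ j → v (g i) ≠ v (g j) := by
    intro i hi j hj hij hVeq
    obtain ⟨hi1, hi2, hai⟩ := hmemT i hi
    obtain ⟨hj1, hj2, haj⟩ := hmemT j hj
    obtain ⟨mi, hmi⟩ := hdisc (a i) hai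
    obtain ⟨mj, hmj⟩ := hdisc (a j) haj
    rw [hval i hi, hval j hj, hDi i hi, hDi j hj, hmi, hmj,
      ← EReal.coe_add, ← EReal.coe_add, ← EReal.coe_add, ← EReal.coe_add,
      EReal.coe_eq_coe_iff] at hVeq
    have hmc : ∀ k : ℕ, (k : ℝ) * c = (k : ℝ) / ((e : ℝ) * (p : ℝ) ^ n) := by
      intro k; rw [hc, div_eq_mul_inv]
    rw [hmc i, hmc j] at hVeq
    rcases le_total (padicValNat p i) (padicValNat p j) with h | h
    · exact key_aux p e n hp he hn i j hi1 hi2 hj1 hj2 hij h mi mj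
        (by push_cast at hVeq ⊢; linarith)
    · exact key_aux p e n hp he hn j i hj1 hj2 hi1 hi2 hij.symm h mj mi
        (by push_cast at hVeq ⊢; linarith)
  rw [hσx, hrestrict, vsum_eq_inf v hv0 hvfin hvbot hvmul hvadd T g hne hdist]
  apply Finset.inf_congr rfl
  intro i hi
  rw [hval i hi, hDi i hi]
  congr 2
  rw [EReal.coe_eq_coe_iff, hc, div_eq_mul_inv]
end

section
/- Let x ∈ K_n = K(π_n) where π_n^{p^n} = π is a uniformizer of K. Suppose that for every σ ∈ Gal(K̄/K) one has v(σx - x) ≥ A. Then for every m with 0 ≤ m ≤ n there exists y_m ∈ K_m such that v(x - y_m) ≥ A - 1/(p^m (p-1)). -/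
open Polynomial Finset

section Aux
variable {L : Type} [Field L]

lemma aux_v_one (v : L → EReal) (hvfin : ∀ x : L, x ≠ 0 → v x ≠ ⊤)
    (hvbot : ∀ x : L, v x ≠ ⊥) (hvmul : ∀ x y : L, v (x * y) = v x + v y) :
    v 1 = 0 := by
  have h1 : (1 : L) ≠ 0 := one_ne_zero
  have h := hvmul 1 1
  rw [one_mul] at h
  have hr : ((v 1).toReal : EReal) = v 1 := EReal.coe_toReal (hvfin 1 h1) (hvbot 1)
  set r := (v 1).toReal with hrdef
  rw [← hr] at h
  have h2 : r = r + r := by exact_mod_cast h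
  have h3 : r = 0 := by linarith
  rw [← hr, h3]
  rfl

lemma aux_v_real (v : L → EReal) (hvfin : ∀ x : L, x ≠ 0 → v x ≠ ⊤)
    (hvbot : ∀ x : L, v x ≠ ⊥) {z : L} (hz : z ≠ 0) :
    ∃ r : ℝ, v z = (r : EReal) :=
  ⟨(v z).toReal, (EReal.coe_toReal (hvfin z hz) (hvbot z)).symm⟩

lemma aux_v_pow (v : L → EReal) (hvfin : ∀ x : L, x ≠ 0 → v x ≠ ⊤)
    (hvbot : ∀ x : L, v x ≠ ⊥) (hvmul : ∀ x y : L, v (x * y) = v x + v y)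
    {z : L} {r : ℝ} (hz : v z = (r : EReal)) (k : ℕ) :
    v (z ^ k) = (((k : ℝ) * r : ℝ) : EReal) := by
  induction k with
  | zero => simp [aux_v_one v hvfin hvbot hvmul]
  | succ k ih =>
      have : z ^ (k + 1) = z ^ k * z := by ring
      rw [this, hvmul, ih, hz, ← EReal.coe_add]
      congr 1
      push_cast
      ring

lemma aux_v_neg (v : L → EReal) (hvfin : ∀ x : L, x ≠ 0 → v x ≠ ⊤)
    (hvbot : ∀ x : L, v x ≠ ⊥) (hvmul : ∀ x y : L, v (x * y) = v x + v y)
    (z : L) : v (-z) = v z := by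
  have hm : v (-1 : L) = 0 := by
    have h := hvmul (-1) (-1)
    rw [neg_one_mul, neg_neg, aux_v_one v hvfin hvbot hvmul] at h
    obtain ⟨r, hr⟩ := aux_v_real v hvfin hvbot (by norm_num : (-1 : L) ≠ 0)
    rw [hr] at h ⊢
    have : (0 : ℝ) = r + r := by exact_mod_cast h
    have : r = 0 := by linarith
    rw [this]; rfl
  calc v (-z) = v ((-1) * z) := by rw [neg_one_mul]
  _ = v (-1 : L) + v z := hvmul _ _
  _ = v z := by rw [hm, zero_add]

lemma aux_v_sum (v : L → EReal) (hv0 : v 0 = ⊤)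
    (hvadd : ∀ x y : L, min (v x) (v y) ≤ v (x + y))
    {ι : Type} (s : Finset ι) (t : ι → L) (b : EReal)
    (h : ∀ i ∈ s, b ≤ v (t i)) : b ≤ v (∑ i ∈ s, t i) := by
  classical
  induction s using Finset.induction_on with
  | empty => simp [hv0]
  | insert a s' hmem ih =>
      rw [Finset.sum_insert hmem]
      refine le_trans (le_min (h a (Finset.mem_insert_self a s')) ?_) (hvadd _ _)
      exact ih fun i hi => h i (Finset.mem_insert_of_mem hi)

lemma aux_v_prod (v : L → EReal) (hvfin : ∀ x : L, x ≠ 0 → v x ≠ ⊤)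
    (hvbot : ∀ x : L, v x ≠ ⊥) (hvmul : ∀ x y : L, v (x * y) = v x + v y)
    {ι : Type} (s : Finset ι) (t : ι → L) :
    v (∏ i ∈ s, t i) = ∑ i ∈ s, v (t i) := by
  classical
  induction s using Finset.induction_on with
  | empty => simp [aux_v_one v hvfin hvbot hvmul]
  | insert a s' hmem ih =>
      rw [Finset.prod_insert hmem, Finset.sum_insert hmem, hvmul, ih]

lemma aux_sum_const {ι : Type} (s : Finset ι) (r : ℝ) :
    (∑ _i ∈ s, (r : EReal)) = ((s.card * r : ℝ) : EReal) := by
  classical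
  induction s using Finset.induction_on with
  | empty => simp
  | insert a s' hmem ih =>
      rw [Finset.sum_insert hmem, ih, Finset.card_insert_of_notMem hmem, ← EReal.coe_add]
      congr 1
      push_cast
      ring

lemma aux_v_sep (v : L → EReal) (hv0 : v 0 = ⊤) (hvfin : ∀ x : L, x ≠ 0 → v x ≠ ⊤)
    (hvbot : ∀ x : L, v x ≠ ⊥) (hvmul : ∀ x y : L, v (x * y) = v x + v y)
    (hvadd : ∀ x y : L, min (v x) (v y) ≤ v (x + y))
    {ι : Type} (s : Finset ι) (t : ι → L) (b : EReal)
    (hsum : b ≤ v (∑ i ∈ s, t i))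
    (hdist : ∀ i ∈ s, ∀ j ∈ s, i ≠ j → t i ≠ 0 → t j ≠ 0 → v (t i) ≠ v (t j)) :
    ∀ i ∈ s, b ≤ v (t i) := by
  classical
  by_contra hcon
  push_neg at hcon
  obtain ⟨i₁, hi₁s, hi₁⟩ := hcon
  set s' : Finset ι := s.filter (fun i => ¬ b ≤ v (t i)) with hs'def
  have hs'ne : s'.Nonempty := ⟨i₁, Finset.mem_filter.mpr ⟨hi₁s, not_le.mpr hi₁⟩⟩
  obtain ⟨i₀, hi₀s', hi₀min⟩ := Finset.exists_min_image s' (fun i => v (t i)) hs'ne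
  have hi₀s : i₀ ∈ s := (Finset.mem_filter.mp hi₀s').1
  have hi₀lt : v (t i₀) < b := not_le.mp (Finset.mem_filter.mp hi₀s').2
  have hti₀ : t i₀ ≠ 0 := by
    intro h0
    rw [h0, hv0] at hi₀lt
    exact absurd (le_top : b ≤ ⊤) (not_le.mpr hi₀lt)
  have hlt_top : v (t i₀) < ⊤ := lt_of_lt_of_le hi₀lt le_top
  have hstrict : ∀ j ∈ s.erase i₀, v (t i₀) < v (t j) := by
    intro j hj
    have hjne : j ≠ i₀ := Finset.ne_of_mem_erase hj
    have hjs : j ∈ s := Finset.mem_of_mem_erase hj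
    by_cases h0 : t j = 0
    · rw [h0, hv0]; exact hlt_top
    · by_cases hjb : b ≤ v (t j)
      · exact lt_of_lt_of_le hi₀lt hjb
      · have hjs' : j ∈ s' := Finset.mem_filter.mpr ⟨hjs, hjb⟩
        exact lt_of_le_of_ne (hi₀min j hjs') (hdist i₀ hi₀s j hjs (Ne.symm hjne) hti₀ h0)
  -- rest
  have hrest : v (t i₀) < v (∑ j ∈ s.erase i₀, t j) := by
    rcases Finset.eq_empty_or_nonempty (s.erase i₀) with he | hne
    · rw [he, Finset.sum_empty, hv0]; exact hlt_top
    · have hinf : ((s.erase i₀).inf (fun j => v (t j))) ≤ v (∑ j ∈ s.erase i₀, t j) :=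
        aux_v_sum v hv0 hvadd _ _ _ (fun j hj => Finset.inf_le hj)
      refine lt_of_lt_of_le ?_ hinf
      exact (Finset.lt_inf_iff hlt_top).mpr hstrict
  have hsplit : t i₀ = (∑ i ∈ s, t i) + (-(∑ j ∈ s.erase i₀, t j)) := by
    have := Finset.sum_erase_add s t hi₀s
    rw [← this]; ring
  have : v (t i₀) < v (t i₀) := by
    calc v (t i₀) < min (v (∑ i ∈ s, t i)) (v (-(∑ j ∈ s.erase i₀, t j))) := by
          rw [aux_v_neg v hvfin hvbot hvmul]
          exact lt_min (lt_of_lt_of_le hi₀lt hsum) hrest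
    _ ≤ v ((∑ i ∈ s, t i) + (-(∑ j ∈ s.erase i₀, t j))) := hvadd _ _
    _ = v (t i₀) := by rw [← hsplit]
  exact absurd this (lt_irrefl _)

end Aux

open Polynomial Finset

section Aux2
variable {L : Type} [Field L]

lemma aux_unit_v_zero (v : L → EReal) (hvfin : ∀ x : L, x ≠ 0 → v x ≠ ⊤)
    (hvbot : ∀ x : L, v x ≠ ⊥) (hvmul : ∀ x y : L, v (x * y) = v x + v y)
    {η : L} {N : ℕ} (hN : 0 < N) (h : η ^ N = 1) : v η = 0 := by
  have hη : η ≠ 0 := by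
    intro h0
    rw [h0, zero_pow hN.ne'] at h
    exact one_ne_zero h.symm
  obtain ⟨r, hr⟩ := aux_v_real v hvfin hvbot hη
  have h1 : v (η ^ N) = (((N : ℝ) * r : ℝ) : EReal) := aux_v_pow v hvfin hvbot hvmul hr N
  rw [h, aux_v_one v hvfin hvbot hvmul] at h1
  have h2 : (0 : ℝ) = (N : ℝ) * r := by exact_mod_cast h1
  have hr0 : r = 0 := by
    have hNne : (N : ℝ) ≠ 0 := Nat.cast_ne_zero.mpr hN.ne'
    have := h2.symm
    rcases mul_eq_zero.mp this with h | h
    · exact absurd h hNne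
    · exact h
  rw [hr, hr0]; rfl

lemma aux_geom_nonneg (v : L → EReal) (hv0 : v 0 = ⊤) (hvfin : ∀ x : L, x ≠ 0 → v x ≠ ⊤)
    (hvbot : ∀ x : L, v x ≠ ⊥) (hvmul : ∀ x y : L, v (x * y) = v x + v y)
    (hvadd : ∀ x y : L, min (v x) (v y) ≤ v (x + y))
    {η : L} {N : ℕ} (hN : 0 < N) (h : η ^ N = 1) (a : ℕ) :
    (0 : EReal) ≤ v (∑ j ∈ Finset.range a, η ^ j) := by
  refine aux_v_sum v hv0 hvadd _ _ _ (fun j _ => ?_)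
  have h0 : v η = ((0 : ℝ) : EReal) := aux_unit_v_zero v hvfin hvbot hvmul hN h
  rw [aux_v_pow v hvfin hvbot hvmul h0 j]
  norm_num

lemma aux_one_sub_pow_ge (v : L → EReal) (hv0 : v 0 = ⊤) (hvfin : ∀ x : L, x ≠ 0 → v x ≠ ⊤)
    (hvbot : ∀ x : L, v x ≠ ⊥) (hvmul : ∀ x y : L, v (x * y) = v x + v y)
    (hvadd : ∀ x y : L, min (v x) (v y) ≤ v (x + y))
    {η : L} {N : ℕ} (hN : 0 < N) (h : η ^ N = 1) (a : ℕ) :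
    v (1 - η) ≤ v (1 - η ^ a) := by
  have hid : 1 - η ^ a = (1 - η) * (∑ j ∈ Finset.range a, η ^ j) := by
    have := geom_sum_mul η a
    have h2 : (1 - η) * (∑ j ∈ Finset.range a, η ^ j) = -((∑ j ∈ Finset.range a, η ^ j) * (η - 1)) := by ring
    rw [h2, this]; ring
  rw [hid, hvmul]
  calc v (1 - η) = v (1 - η) + 0 := (add_zero _).symm
  _ ≤ v (1 - η) + v (∑ j ∈ Finset.range a, η ^ j) := by
      exact add_le_add le_rfl (aux_geom_nonneg v hv0 hvfin hvbot hvmul hvadd hN h a)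

lemma aux_equal_val (v : L → EReal) (hv0 : v 0 = ⊤) (hvfin : ∀ x : L, x ≠ 0 → v x ≠ ⊤)
    (hvbot : ∀ x : L, v x ≠ ⊥) (hvmul : ∀ x y : L, v (x * y) = v x + v y)
    (hvadd : ∀ x y : L, min (v x) (v y) ≤ v (x + y))
    {η : L} {N : ℕ} (hN : 0 < N) (h : η ^ N = 1) {a : ℕ} (ha : Nat.Coprime a N) :
    v (1 - η ^ a) = v (1 - η) := by
  rcases eq_or_lt_of_le (Nat.one_le_iff_ne_zero.mpr hN.ne' : 1 ≤ N) with hN1 | hN1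
  · -- N = 1 : η = 1
    have : η = 1 := by rw [← hN1, pow_one] at h; exact h
    simp [this]
  · -- 1 < N
    obtain ⟨b, -, hb⟩ := Nat.exists_mul_mod_eq_one_of_coprime ha hN1
    have hab : η ^ (a * b) = η := by
      conv_rhs => rw [← pow_one η]
      rw [← hb]
      conv_lhs => rw [← Nat.div_add_mod (a * b) N]
      rw [pow_add, pow_mul, h, one_pow, one_mul]
    refine le_antisymm ?_ (aux_one_sub_pow_ge v hv0 hvfin hvbot hvmul hvadd hN h a)
    have hNa : (η ^ a) ^ N = 1 := by rw [← pow_mul, mul_comm, pow_mul, h, one_pow]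
    have := aux_one_sub_pow_ge v hv0 hvfin hvbot hvmul hvadd hN hNa b
    rwa [← pow_mul, hab] at this

end Aux2

section Aux3
variable {L : Type} [Field L] [IsAlgClosed L] [CharZero L]

lemma aux_zeta (v : L → EReal) (hv0 : v 0 = ⊤) (hvfin : ∀ x : L, x ≠ 0 → v x ≠ ⊤)
    (hvbot : ∀ x : L, v x ≠ ⊥) (hvmul : ∀ x y : L, v (x * y) = v x + v y)
    (hvadd : ∀ x y : L, min (v x) (v y) ≤ v (x + y))
    {p : ℕ} (hp : p.Prime) (hvp : v ((p : ℕ) : L) = 1)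
    (t : ℕ) {ξ : L} (h1 : ξ ^ p ^ (t + 1) = 1) (h2 : ξ ^ p ^ t ≠ 1) :
    v (1 - ξ) = ((((p : ℝ) ^ t * ((p : ℝ) - 1))⁻¹ : ℝ) : EReal) := by
  classical
  haveI : Fact p.Prime := ⟨hp⟩
  have hpos0 : 0 < p ^ t := pow_pos hp.pos t
  have hpos1 : 0 < p ^ (t + 1) := pow_pos hp.pos (t + 1)
  haveI : NeZero (p ^ (t + 1)) := ⟨hpos1.ne'⟩
  have hord : orderOf ξ = p ^ (t + 1) := orderOf_eq_prime_pow h2 h1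
  have hprim : IsPrimitiveRoot ξ (p ^ (t + 1)) := hord ▸ IsPrimitiveRoot.orderOf ξ
  have hprim' : IsPrimitiveRoot (ξ ^ p) (p ^ t) := by
    have hd : p ∣ p ^ (t + 1) := dvd_pow_self p (Nat.succ_ne_zero t)
    have := hprim.pow_of_dvd hp.ne_zero hd
    rwa [pow_succ, Nat.mul_div_cancel _ hp.pos] at this
  set S : Finset L :=
    Polynomial.nthRootsFinset (p ^ (t + 1)) (1 : L) \ Polynomial.nthRootsFinset (p ^ t) (1 : L) with hSdef
  have hsub : Polynomial.nthRootsFinset (p ^ t) (1 : L) ⊆ Polynomial.nthRootsFinset (p ^ (t + 1)) (1 : L) := by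
    intro η hη
    rw [Polynomial.mem_nthRootsFinset hpos0] at hη
    rw [Polynomial.mem_nthRootsFinset hpos1, pow_succ, pow_mul, hη, one_pow]
  have hps : (∏ η ∈ S, ((Polynomial.X : Polynomial L) - Polynomial.C η)) *
      ((Polynomial.X : Polynomial L) ^ (p ^ t) - 1) =
      (Polynomial.X : Polynomial L) ^ (p ^ (t + 1)) - 1 := by
    rw [Polynomial.X_pow_sub_one_eq_prod hpos0 hprim',
      Polynomial.X_pow_sub_one_eq_prod hpos1 hprim]
    exact Finset.prod_sdiff hsub
  have hgeom : (∑ j ∈ Finset.range p, ((Polynomial.X : Polynomial L) ^ (p ^ t)) ^ j) *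
      ((Polynomial.X : Polynomial L) ^ (p ^ t) - 1) =
      (Polynomial.X : Polynomial L) ^ (p ^ (t + 1)) - 1 := by
    have := geom_sum_mul ((Polynomial.X : Polynomial L) ^ (p ^ t)) p
    rwa [← pow_mul, ← pow_succ] at this
  have hXne : ((Polynomial.X : Polynomial L) ^ (p ^ t) - 1) ≠ 0 := by
    have := Polynomial.X_pow_sub_C_ne_zero hpos0 (1 : L)
    rwa [Polynomial.C_1] at this
  have hcancel : (∏ η ∈ S, ((Polynomial.X : Polynomial L) - Polynomial.C η)) =
      ∑ j ∈ Finset.range p, ((Polynomial.X : Polynomial L) ^ (p ^ t)) ^ j :=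
    mul_right_cancel₀ hXne (hps.trans hgeom.symm)
  have heval : (∏ η ∈ S, ((1 : L) - η)) = (p : L) := by
    have := congrArg (Polynomial.eval (1 : L)) hcancel
    rw [Polynomial.eval_prod, Polynomial.eval_finset_sum] at this
    simpa using this
  have hvp' : v (∏ η ∈ S, ((1 : L) - η)) = (1 : EReal) := by rw [heval, hvp]
  have hvsum : (∑ η ∈ S, v ((1 : L) - η)) = (1 : EReal) := by
    rw [← aux_v_prod v hvfin hvbot hvmul S (fun η => (1 : L) - η)]
    exact hvp'
  have hveq : ∀ η ∈ S, v ((1 : L) - η) = v (1 - ξ) := by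
    intro η hη
    rw [hSdef, Finset.mem_sdiff] at hη
    obtain ⟨hη1, hη2⟩ := hη
    rw [Polynomial.mem_nthRootsFinset hpos1] at hη1
    rw [Polynomial.mem_nthRootsFinset hpos0] at hη2
    obtain ⟨a, _, rfl⟩ := hprim.eq_pow_of_pow_eq_one hη1
    have hnd : ¬ p ∣ a := by
      rintro ⟨a', rfl⟩
      apply hη2
      rw [← pow_mul]
      have : p * a' * p ^ t = a' * p ^ (t + 1) := by ring
      rw [this, pow_mul', h1, one_pow]
    have hcop : Nat.Coprime a (p ^ (t + 1)) :=
      Nat.Coprime.pow_right _ (Nat.coprime_comm.mp (hp.coprime_iff_not_dvd.mpr hnd))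
    exact aux_equal_val v hv0 hvfin hvbot hvmul hvadd hpos1 h1 hcop
  have hξne : (1 : L) - ξ ≠ 0 := by
    intro h0
    apply h2
    have : ξ = 1 := by linear_combination -h0
    rw [this, one_pow]
  obtain ⟨r, hr⟩ := aux_v_real v hvfin hvbot hξne
  have hsum2 : (∑ η ∈ S, ((r : EReal))) = (1 : EReal) := by
    rw [← hvsum]
    exact (Finset.sum_congr rfl fun η hη => by rw [hveq η hη, hr]).symm
  rw [aux_sum_const] at hsum2
  have hcard : S.card = p ^ (t + 1) - p ^ t := by
    rw [hSdef, Finset.card_sdiff_of_subset hsub, hprim.card_nthRootsFinset, hprim'.card_nthRootsFinset]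
  have hle : p ^ t ≤ p ^ (t + 1) := Nat.pow_le_pow_right hp.pos (Nat.le_succ t)
  have hcval : ((S.card : ℝ)) = (p : ℝ) ^ t * ((p : ℝ) - 1) := by
    rw [hcard]
    push_cast [Nat.cast_sub hle]
    ring
  have hmul : ((p : ℝ) ^ t * ((p : ℝ) - 1)) * r = 1 := by
    have : ((S.card * r : ℝ) : EReal) = ((1 : ℝ) : EReal) := by
      rw [hsum2]; rfl
    have h3 : (S.card : ℝ) * r = 1 := by exact_mod_cast this
    rwa [hcval] at h3
  have : ((p : ℝ) ^ t * ((p : ℝ) - 1))⁻¹ = r := inv_eq_of_mul_eq_one_right hmul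
  rw [hr, ← this]

end Aux3

section Aux4

lemma aux_cancel (P : ℤ) (hP : 0 < P) (i j : ℕ) (ki kj : ℤ)
    (hi : (i : ℤ) < P) (hj : (j : ℤ) < P) (h : ki * P + i = kj * P + j) : i = j := by
  have h1 : (i : ℤ) - j = (kj - ki) * P := by linarith
  have hi0 : (0 : ℤ) ≤ i := Int.natCast_nonneg i
  have hj0 : (0 : ℤ) ≤ j := Int.natCast_nonneg j
  rcases lt_trichotomy (kj - ki) 0 with h2 | h2 | h2
  · have h3 : kj - ki ≤ -1 := by omega
    have h4 : (kj - ki) * P ≤ -1 * P := mul_le_mul_of_nonneg_right h3 hP.le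
    have : (i : ℤ) - j ≤ -P := by linarith
    have : (i : ℤ) = j := by linarith
    exact_mod_cast this
  · rw [h2, zero_mul] at h1
    have : (i : ℤ) = j := by linarith
    exact_mod_cast this
  · have h3 : 1 ≤ kj - ki := by omega
    have h4 : 1 * P ≤ (kj - ki) * P := mul_le_mul_of_nonneg_right h3 hP.le
    have : (i : ℤ) = j := by linarith
    exact_mod_cast this

lemma aux_int_lt (p : ℕ) (hp : p.Prime) (e n : ℕ) (i j ti tj : ℕ) (ki kj : ℤ)
    (hti : ti + 1 ≤ n) (htj : tj + 1 ≤ n) (hlt : ti < tj)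
    (hdi' : ¬ p ^ (ti + 1) ∣ i) (hdj : p ^ tj ∣ j)
    (heq : (ki * (p : ℤ) ^ n + i) * ((p : ℤ) - 1) + e * (p : ℤ) ^ (ti + 1)
         = (kj * (p : ℤ) ^ n + j) * ((p : ℤ) - 1) + e * (p : ℤ) ^ (tj + 1)) : False := by
  have hp2 : 2 ≤ p := hp.two_le
  set q : ℤ := (p : ℤ) ^ (ti + 1) with hq
  have hqP : q ∣ (p : ℤ) ^ n := pow_dvd_pow _ hti
  have hqTj : q ∣ (p : ℤ) ^ (tj + 1) := pow_dvd_pow _ (by omega)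
  have hqj : q ∣ (j : ℤ) := by
    have h1 : ((p : ℤ)) ^ (ti + 1) ∣ ((p : ℤ)) ^ tj := pow_dvd_pow _ (by omega)
    have h2 : ((p : ℤ)) ^ tj ∣ (j : ℤ) := by exact_mod_cast Int.natCast_dvd_natCast.mpr hdj
    exact h1.trans h2
  have h5 : (i : ℤ) * ((p : ℤ) - 1) =
      (kj * (p : ℤ) ^ n) * ((p : ℤ) - 1) + (j : ℤ) * ((p : ℤ) - 1) + e * (p : ℤ) ^ (tj + 1)
      - e * q - (ki * (p : ℤ) ^ n) * ((p : ℤ) - 1) := by linarith [heq]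
  have hdvd : q ∣ (i : ℤ) * ((p : ℤ) - 1) := by
    rw [h5]
    have d1 : q ∣ (kj * (p : ℤ) ^ n) * ((p : ℤ) - 1) := (hqP.mul_left kj).mul_right _
    have d2 : q ∣ (j : ℤ) * ((p : ℤ) - 1) := hqj.mul_right _
    have d3 : q ∣ (e : ℤ) * (p : ℤ) ^ (tj + 1) := hqTj.mul_left _
    have d4 : q ∣ (e : ℤ) * q := Dvd.dvd.mul_left dvd_rfl _
    have d5 : q ∣ (ki * (p : ℤ) ^ n) * ((p : ℤ) - 1) := (hqP.mul_left ki).mul_right _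
    exact (((d1.add d2).add d3).sub d4).sub d5
  have hcast : (i : ℤ) * ((p : ℤ) - 1) = ((i * (p - 1) : ℕ) : ℤ) := by
    push_cast [Nat.cast_sub hp.one_le]
    ring
  rw [hcast] at hdvd
  have hdvdN : p ^ (ti + 1) ∣ i * (p - 1) := by
    have h6 : ((p ^ (ti + 1) : ℕ) : ℤ) ∣ ((i * (p - 1) : ℕ) : ℤ) := by
      rw [hq] at hdvd
      push_cast
      exact hdvd
    exact_mod_cast h6
  have hndvd : ¬ p ∣ (p - 1) := by
    intro h
    have := Nat.le_of_dvd (by omega) h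
    omega
  have hcop : Nat.Coprime (p ^ (ti + 1)) (p - 1) :=
    Nat.Coprime.pow_left _ (hp.coprime_iff_not_dvd.mpr hndvd)
  exact hdi' (hcop.dvd_of_dvd_mul_right hdvdN)

lemma aux_int (p : ℕ) (hp : p.Prime) (e n : ℕ) (i j ti tj : ℕ) (ki kj : ℤ)
    (hi : i < p ^ n) (hj : j < p ^ n)
    (hti : ti + 1 ≤ n) (htj : tj + 1 ≤ n)
    (hdi : p ^ ti ∣ i) (hdi' : ¬ p ^ (ti + 1) ∣ i)
    (hdj : p ^ tj ∣ j) (hdj' : ¬ p ^ (tj + 1) ∣ j)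
    (heq : (ki * (p : ℤ) ^ n + i) * ((p : ℤ) - 1) + e * (p : ℤ) ^ (ti + 1)
         = (kj * (p : ℤ) ^ n + j) * ((p : ℤ) - 1) + e * (p : ℤ) ^ (tj + 1)) : i = j := by
  rcases lt_trichotomy ti tj with hlt | hEq | hgt
  · exact absurd (aux_int_lt p hp e n i j ti tj ki kj hti htj hlt hdi' hdj heq) not_false
  · subst hEq
    have h1 : (ki * (p : ℤ) ^ n + i) * ((p : ℤ) - 1) = (kj * (p : ℤ) ^ n + j) * ((p : ℤ) - 1) := by
      linarith [heq]
    have hpne : ((p : ℤ) - 1) ≠ 0 := by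
      have : (2 : ℤ) ≤ p := by exact_mod_cast hp.two_le
      omega
    have h2 : ki * (p : ℤ) ^ n + i = kj * (p : ℤ) ^ n + j := mul_right_cancel₀ hpne h1
    have hP : (0 : ℤ) < (p : ℤ) ^ n := by
      have : (0 : ℤ) < (p : ℤ) := by exact_mod_cast hp.pos
      positivity
    exact aux_cancel _ hP i j ki kj (by exact_mod_cast hi) (by exact_mod_cast hj) h2
  · exact absurd (aux_int_lt p hp e n j i tj ti kj ki htj hti hgt hdj' hdi heq.symm) not_false

lemma aux_frac (p e n t : ℕ) (hp : p.Prime) (he : 0 < e) (ht : t + 1 ≤ n) (k : ℤ) (i : ℕ) :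
    (k : ℝ) / e + (i : ℝ) * ((e : ℝ) * (p : ℝ) ^ n)⁻¹ + ((p : ℝ) ^ (n - 1 - t) * ((p : ℝ) - 1))⁻¹
      = (((k * (p : ℤ) ^ n + i) * ((p : ℤ) - 1) + e * (p : ℤ) ^ (t + 1) : ℤ) : ℝ)
        / ((e : ℝ) * (p : ℝ) ^ n * ((p : ℝ) - 1)) := by
  have hp2 : (2 : ℝ) ≤ (p : ℝ) := by exact_mod_cast hp.two_le
  have hene : (e : ℝ) ≠ 0 := by positivity
  have hpne : (p : ℝ) ≠ 0 := by linarith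
  have hpn : (p : ℝ) ^ n ≠ 0 := pow_ne_zero _ hpne
  have hpt : (p : ℝ) ^ (n - 1 - t) ≠ 0 := pow_ne_zero _ hpne
  have hp1 : (p : ℝ) - 1 ≠ 0 := by linarith
  have hkey : (p : ℝ) ^ (n - 1 - t) * (p : ℝ) ^ (t + 1) = (p : ℝ) ^ n := by
    rw [← pow_add]
    congr 1
    omega
  push_cast
  field_simp
  linear_combination (-(e : ℝ)) * hkey

end Aux4

/-- Setting: `K` finite totally ramified over `Frac W(k)` with index `e`, encoded by a
valuation `v` on an algebraic closure of `K` with `v p = 1`, `v π = 1/e`, `v(K^×) = (1/e)ℤ`;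
`π_0 = π`, `π_{m+1}^p = π_m`, `K_m = K(π_m)`.  If `x ∈ K_n` satisfies
`v (σ x - x) ≥ A` for all `σ ∈ Gal(K̄/K)`, then for every `0 ≤ m ≤ n` there is
`y_m ∈ K_m` with `v (x - y_m) ≥ A - 1/(p^m (p-1))`. -/
theorem stmt4 (p : ℕ) [Fact p.Prime] (K : Type) [Field K] [CharZero K]
    (e : ℕ) (he : 0 < e)
    (v : AlgebraicClosure K → EReal)
    (hv0 : v 0 = ⊤)
    (hvfin : ∀ x : AlgebraicClosure K, x ≠ 0 → v x ≠ ⊤)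
    (hvbot : ∀ x : AlgebraicClosure K, v x ≠ ⊥)
    (hvmul : ∀ x y : AlgebraicClosure K, v (x * y) = v x + v y)
    (hvadd : ∀ x y : AlgebraicClosure K, min (v x) (v y) ≤ v (x + y))
    (hvp : v ((p : ℕ) : AlgebraicClosure K) = 1)
    (π : K)
    (hπ : v (algebraMap K (AlgebraicClosure K) π) = (((e : ℝ)⁻¹ : ℝ) : EReal))
    (hdisc : ∀ y : K, y ≠ 0 →
      ∃ m : ℤ, v (algebraMap K (AlgebraicClosure K) y) = (((m : ℝ) / e : ℝ) : EReal))
    (πs : ℕ → AlgebraicClosure K)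
    (hπ0 : πs 0 = algebraMap K (AlgebraicClosure K) π)
    (hπs : ∀ m, πs (m + 1) ^ p = πs m)
    (n : ℕ) (x : AlgebraicClosure K) (hx : x ∈ IntermediateField.adjoin K {πs n})
    (A : ℝ)
    (hGal : ∀ σ : AlgebraicClosure K ≃ₐ[K] AlgebraicClosure K,
      (A : EReal) ≤ v (σ x - x)) :
    ∀ m : ℕ, m ≤ n → ∃ y ∈ IntermediateField.adjoin K {πs m},
      (((A - 1 / (p ^ m * ((p : ℝ) - 1))) : ℝ) : EReal) ≤ v (x - y) := by
  intro m hm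
  classical
  have hp : p.Prime := Fact.out
  have hp2 : 2 ≤ p := hp.two_le
  have hpR2 : (2 : ℝ) ≤ (p : ℝ) := by exact_mod_cast hp2
  have hpRne : (p : ℝ) ≠ 0 := by linarith
  have heRne : (e : ℝ) ≠ 0 := Nat.cast_ne_zero.mpr he.ne'
  have hpnpos : 0 < p ^ n := pow_pos hp.pos n
  have hπK : π ≠ 0 := by
    intro h0
    rw [h0, map_zero, hv0] at hπ
    exact (EReal.coe_ne_top _) hπ.symm
  have hπ0ne : πs 0 ≠ 0 := by
    rw [hπ0]
    intro h0
    exact hπK ((algebraMap K (AlgebraicClosure K)).injective (by rw [h0, map_zero]))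
  have hpowk : ∀ a b : ℕ, πs (a + b) ^ (p ^ b) = πs a := by
    intro a b
    induction b with
    | zero => simp
    | succ b ih =>
        have h1 : πs (a + (b + 1)) ^ p ^ (b + 1) = (πs (a + b + 1) ^ p) ^ p ^ b := by
          rw [← pow_mul]
          congr 1
          ring
        rw [h1, hπs (a + b), ih]
  have hpow0n : πs n ^ (p ^ n) = πs 0 := by
    have := hpowk 0 n
    rwa [zero_add] at this
  have hπsne : ∀ k, πs k ≠ 0 := by
    intro k h0
    apply hπ0ne
    have := hpowk 0 k
    rw [zero_add, h0, zero_pow (pow_pos hp.pos k).ne'] at this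
    exact this.symm
  obtain ⟨rπ, hrπ⟩ := aux_v_real v hvfin hvbot (hπsne n)
  have hrπval : rπ = ((e : ℝ) * (p : ℝ) ^ n)⁻¹ := by
    have h1 : v (πs n ^ (p ^ n)) = ((((p ^ n : ℕ) : ℝ) * rπ : ℝ) : EReal) :=
      aux_v_pow v hvfin hvbot hvmul hrπ (p ^ n)
    rw [hpow0n, hπ0, hπ] at h1
    have h2 : (e : ℝ)⁻¹ = ((p ^ n : ℕ) : ℝ) * rπ := by exact_mod_cast h1
    have h3 : ((p ^ n : ℕ) : ℝ) = (p : ℝ) ^ n := by push_cast; ring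
    rw [h3] at h2
    have h4 : (p : ℝ) ^ n ≠ 0 := pow_ne_zero _ hpRne
    field_simp at h2 ⊢
    linarith [h2]
  set P : Polynomial K := Polynomial.X ^ (p ^ n) - Polynomial.C π with hPdef
  have hPmonic : P.Monic := monic_X_pow_sub_C π hpnpos.ne'
  have haevalP : Polynomial.aeval (πs n) P = 0 := by
    rw [hPdef, map_sub, map_pow, Polynomial.aeval_X, Polynomial.aeval_C, hpow0n, hπ0, sub_self]
  have hint : IsIntegral K (πs n) := ⟨P, hPmonic, haevalP⟩
  have hTval : ∀ (c : K), c ≠ 0 → ∀ i : ℕ, ∃ k : ℤ,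
      v (algebraMap K (AlgebraicClosure K) c * πs n ^ i) =
        (((k : ℝ) / e + (i : ℝ) * ((e : ℝ) * (p : ℝ) ^ n)⁻¹ : ℝ) : EReal) := by
    intro c hc i
    obtain ⟨k, hk⟩ := hdisc c hc
    refine ⟨k, ?_⟩
    rw [hvmul, hk, aux_v_pow v hvfin hvbot hvmul hrπ i, hrπval, ← EReal.coe_add]
  have hTdist : ∀ i, i < p ^ n → ∀ j, j < p ^ n → ∀ ci cj : K, ci ≠ 0 → cj ≠ 0 →
      v (algebraMap K (AlgebraicClosure K) ci * πs n ^ i) = v (algebraMap K (AlgebraicClosure K) cj * πs n ^ j) → i = j := by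
    intro i hi j hj ci cj hci hcj hveq
    obtain ⟨ki, hki⟩ := hTval ci hci i
    obtain ⟨kj, hkj⟩ := hTval cj hcj j
    rw [hki, hkj] at hveq
    have hreq : (ki : ℝ) / e + (i : ℝ) * ((e : ℝ) * (p : ℝ) ^ n)⁻¹
        = (kj : ℝ) / e + (j : ℝ) * ((e : ℝ) * (p : ℝ) ^ n)⁻¹ := by exact_mod_cast hveq
    have h4 : (p : ℝ) ^ n ≠ 0 := pow_ne_zero _ hpRne
    have hfrac : ∀ (k : ℤ) (i : ℕ), (k : ℝ) / e + (i : ℝ) * ((e : ℝ) * (p : ℝ) ^ n)⁻¹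
        = ((k * (p : ℤ) ^ n + i : ℤ) : ℝ) / ((e : ℝ) * (p : ℝ) ^ n) := by
      intro k i
      push_cast
      field_simp
    rw [hfrac ki i, hfrac kj j] at hreq
    have hDne : ((e : ℝ) * (p : ℝ) ^ n) ≠ 0 := mul_ne_zero heRne h4
    rw [div_eq_div_iff hDne hDne] at hreq
    have hZR := mul_right_cancel₀ hDne hreq
    have hZ : (ki * (p : ℤ) ^ n + i : ℤ) = (kj * (p : ℤ) ^ n + j : ℤ) := by exact_mod_cast hZR
    have hPpos : (0 : ℤ) < (p : ℤ) ^ n := by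
      have : (0 : ℤ) < (p : ℤ) := by exact_mod_cast hp.pos
      positivity
    exact aux_cancel _ hPpos i j ki kj (by exact_mod_cast hi) (by exact_mod_cast hj) hZ
  have hdeg : (minpoly K (πs n)).natDegree = p ^ n := by
    have hdvd := minpoly.dvd K (πs n) haevalP
    have hle : (minpoly K (πs n)).natDegree ≤ p ^ n := by
      have h1 := Polynomial.natDegree_le_of_dvd hdvd hPmonic.ne_zero
      rwa [hPdef, natDegree_X_pow_sub_C] at h1
    rcases eq_or_lt_of_le hle with hEq | hlt
    · exact hEq
    · exfalso
      have hg0 : Polynomial.aeval (πs n) (minpoly K (πs n)) = 0 := minpoly.aeval K (πs n)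
      rw [Polynomial.aeval_eq_sum_range' hlt] at hg0
      simp only [Algebra.smul_def] at hg0
      have hsep := aux_v_sep v hv0 hvfin hvbot hvmul hvadd (Finset.range (p ^ n))
        (fun i => algebraMap K (AlgebraicClosure K) ((minpoly K (πs n)).coeff i) * πs n ^ i) ⊤
        (by rw [hg0, hv0])
        (by
          intro i hi j hj hij hti htj hveq
          apply hij
          refine hTdist i (Finset.mem_range.mp hi) j (Finset.mem_range.mp hj)
            ((minpoly K (πs n)).coeff i) ((minpoly K (πs n)).coeff j) ?_ ?_ hveq
          · intro h0; apply hti; simp only [h0, map_zero, zero_mul]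
          · intro h0; apply htj; simp only [h0, map_zero, zero_mul])
      have hDmem : (minpoly K (πs n)).natDegree ∈ Finset.range (p ^ n) := Finset.mem_range.mpr hlt
      have htop := hsep (minpoly K (πs n)).natDegree hDmem
      have hlead : (minpoly K (πs n)).coeff (minpoly K (πs n)).natDegree = 1 :=
        (minpoly.monic hint).coeff_natDegree
      simp only [hlead, map_one, one_mul] at htop
      exact hvfin _ (pow_ne_zero _ (hπsne n)) (top_le_iff.mp htop)
  have hminpoly : minpoly K (πs n) = P := by
    obtain ⟨cpol, hcpol⟩ := minpoly.dvd K (πs n) haevalP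
    have hmne : minpoly K (πs n) ≠ 0 := minpoly.ne_zero hint
    have hcne : cpol ≠ 0 := by
      intro h0
      rw [h0, mul_zero] at hcpol
      exact hPmonic.ne_zero hcpol
    have hdegs : P.natDegree = (minpoly K (πs n)).natDegree + cpol.natDegree := by
      rw [hcpol, Polynomial.natDegree_mul hmne hcne]
    rw [hPdef, natDegree_X_pow_sub_C, hdeg] at hdegs
    have hc0 : cpol.natDegree = 0 := by omega
    have hca : cpol = Polynomial.C (cpol.coeff 0) := Polynomial.eq_C_of_natDegree_eq_zero hc0
    have hlead : P.leadingCoeff = (minpoly K (πs n)).leadingCoeff * cpol.leadingCoeff := by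
      rw [hcpol, Polynomial.leadingCoeff_mul]
    rw [hPmonic.leadingCoeff, (minpoly.monic hint).leadingCoeff, one_mul] at hlead
    have hc1 : cpol.coeff 0 = 1 := by
      have : cpol.leadingCoeff = cpol.coeff 0 := by
        rw [Polynomial.leadingCoeff, hc0]
      rw [this] at hlead
      exact hlead.symm
    rw [hcpol, hca, hc1, Polynomial.C_1, mul_one]
  haveI : NeZero ((p ^ n : ℕ) : AlgebraicClosure K) := ⟨Nat.cast_ne_zero.mpr hpnpos.ne'⟩
  obtain ⟨ζ, hζ⟩ : ∃ ζ : AlgebraicClosure K, IsPrimitiveRoot ζ (p ^ n) := by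
    have hdegC : (cyclotomic (p ^ n) (AlgebraicClosure K)).degree ≠ 0 := by
      rw [degree_cyclotomic]
      exact_mod_cast (Nat.totient_pos.mpr hpnpos).ne'
    obtain ⟨ζ, hζr⟩ := IsAlgClosed.exists_root _ hdegC
    exact ⟨ζ, (isRoot_cyclotomic_iff).mp hζr⟩
  have hζpow : ζ ^ (p ^ n) = 1 := hζ.pow_eq_one
  obtain ⟨σ, hσ⟩ : ∃ σ : AlgebraicClosure K ≃ₐ[K] AlgebraicClosure K, σ (πs n) = ζ * πs n := by
    have hroot2 : Polynomial.aeval (ζ * πs n) P = 0 := by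
      rw [hPdef, map_sub, map_pow, Polynomial.aeval_X, Polynomial.aeval_C,
        mul_pow, hζpow, one_mul, hpow0n, hπ0, sub_self]
    have hirr : Irreducible P := hminpoly ▸ minpoly.irreducible hint
    have hconj : IsConjRoot K (ζ * πs n) (πs n) := by
      show minpoly K (ζ * πs n) = minpoly K (πs n)
      rw [hminpoly]
      exact (minpoly.eq_of_irreducible_of_monic hirr hroot2 hPmonic).symm
    exact hconj.exists_algEquiv
  obtain ⟨f0, hf0⟩ : ∃ f : Polynomial K, Polynomial.aeval (πs n) f = x := by
    have h2 := IntermediateField.adjoin_simple_toSubalgebra_of_isAlgebraic hint.isAlgebraic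
    have hx2 : x ∈ Algebra.adjoin K {πs n} := by rw [← h2]; exact hx
    rw [Algebra.adjoin_singleton_eq_range_aeval] at hx2
    exact hx2
  set g : Polynomial K := f0 %ₘ P with hgdef
  have hgx : Polynomial.aeval (πs n) g = x := by
    rw [hgdef, Polynomial.aeval_modByMonic_eq_self_of_root haevalP]
    exact hf0
  have hgdeg : g.natDegree < p ^ n := by
    rcases eq_or_ne g 0 with h0 | h0
    · rw [h0, Polynomial.natDegree_zero]; exact hpnpos
    · have h1 := Polynomial.degree_modByMonic_lt f0 hPmonic
      have h2 : g.natDegree < P.natDegree := Polynomial.natDegree_lt_natDegree h0 h1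
      rwa [hPdef, natDegree_X_pow_sub_C] at h2
  have hxsum : x = ∑ i ∈ Finset.range (p ^ n), algebraMap K (AlgebraicClosure K) (g.coeff i) * πs n ^ i := by
    rw [← hgx, Polynomial.aeval_eq_sum_range' hgdeg]
    exact Finset.sum_congr rfl fun i _ => Algebra.smul_def _ _
  set q := p ^ (n - m) with hqdef
  set y : AlgebraicClosure K := ∑ i ∈ (Finset.range (p ^ n)).filter (fun i => q ∣ i),
    algebraMap K (AlgebraicClosure K) (g.coeff i) * πs n ^ i with hydef
  have hπnm : πs n ^ q = πs m := by
    have := hpowk m (n - m)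
    rwa [Nat.add_sub_cancel' hm] at this
  refine ⟨y, ?_, ?_⟩
  · rw [hydef]
    refine sum_mem fun i hi => ?_
    obtain ⟨a, ha⟩ := (Finset.mem_filter.mp hi).2
    have hpw : πs n ^ i = (πs m) ^ a := by rw [ha, pow_mul, hπnm]
    rw [hpw]
    exact mul_mem (IntermediateField.algebraMap_mem _ _)
      (pow_mem (IntermediateField.subset_adjoin K {πs m} (Set.mem_singleton _)) a)
  · -- the valuation bound
    have hσx : σ x - x = ∑ i ∈ Finset.range (p ^ n),
        algebraMap K (AlgebraicClosure K) (g.coeff i) * ((ζ ^ i - 1) * πs n ^ i) := by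
      have h1 : σ x = ∑ i ∈ Finset.range (p ^ n),
          algebraMap K (AlgebraicClosure K) (g.coeff i) * (ζ * πs n) ^ i := by
        rw [hxsum, map_sum]
        refine Finset.sum_congr rfl fun i _ => ?_
        rw [map_mul, map_pow, hσ, AlgEquiv.commutes]
      rw [h1]
      nth_rewrite 1 [hxsum]
      rw [← Finset.sum_sub_distrib]
      refine Finset.sum_congr rfl fun i _ => ?_
      rw [mul_pow]
      ring
    have hval : ∀ i, i ≠ 0 → i < p ^ n → g.coeff i ≠ 0 → ∃ (k : ℤ) (t : ℕ),
        (t + 1 ≤ n ∧ p ^ t ∣ i ∧ ¬ p ^ (t + 1) ∣ i) ∧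
        v (algebraMap K (AlgebraicClosure K) (g.coeff i) * πs n ^ i) =
          (((k : ℝ) / e + (i : ℝ) * ((e : ℝ) * (p : ℝ) ^ n)⁻¹ : ℝ) : EReal) ∧
        v (algebraMap K (AlgebraicClosure K) (g.coeff i) * ((ζ ^ i - 1) * πs n ^ i)) =
          (((k : ℝ) / e + (i : ℝ) * ((e : ℝ) * (p : ℝ) ^ n)⁻¹
            + ((p : ℝ) ^ (n - 1 - t) * ((p : ℝ) - 1))⁻¹ : ℝ) : EReal) := by
      intro i hi0 hilt hci
      obtain ⟨k, hk⟩ := hTval (g.coeff i) hci i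
      set t := padicValNat p i with htdef
      have hdvd : p ^ t ∣ i := pow_padicValNat_dvd
      have hndvd : ¬ p ^ (t + 1) ∣ i := pow_succ_padicValNat_not_dvd hi0
      have htlt : t + 1 ≤ n := by
        by_contra hcon
        push_neg at hcon
        have h5 : p ^ n ∣ i := dvd_trans (pow_dvd_pow p (by omega)) hdvd
        have h6 := Nat.le_of_dvd (Nat.pos_of_ne_zero hi0) h5
        omega
      obtain ⟨c, hc⟩ := hdvd
      have hpc : ¬ p ∣ c := by
        rintro ⟨d, rfl⟩
        exact hndvd ⟨d, by rw [hc]; ring⟩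
      set u := n - 1 - t with hudef
      have hu1 : u + 1 = n - t := by omega
      have hzi1 : (ζ ^ i) ^ (p ^ (u + 1)) = 1 := by
        rw [← pow_mul]
        have h7 : i * p ^ (u + 1) = c * p ^ n := by
          rw [hc, hu1, mul_comm (p ^ t) c, mul_assoc, ← pow_add]
          congr 2
          omega
        rw [h7, pow_mul', hζpow, one_pow]
      have hzi2 : (ζ ^ i) ^ (p ^ u) ≠ 1 := by
        rw [← pow_mul]
        have h8 : i * p ^ u = c * p ^ (n - 1) := by
          rw [hc, mul_comm (p ^ t) c, mul_assoc, ← pow_add]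
          congr 2
          omega
        rw [h8]
        intro h1
        have hdvd2 : p ^ n ∣ c * p ^ (n - 1) := (hζ.pow_eq_one_iff_dvd _).mp h1
        obtain ⟨d, hd⟩ := hdvd2
        have hn1 : (n - 1) + 1 = n := by omega
        have h9 : c * p ^ (n - 1) = (d * p) * p ^ (n - 1) := by
          rw [hd]
          have h9b : p ^ n = p * p ^ (n - 1) := by
            conv_lhs => rw [← hn1]
            rw [pow_succ]
            ring
          rw [h9b]
          ring
        have hcd : c = d * p := Nat.eq_of_mul_eq_mul_right (pow_pos hp.pos _) h9
        exact hpc ⟨d, by rw [hcd]; ring⟩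
      have hzval : v (1 - ζ ^ i) = ((((p : ℝ) ^ u * ((p : ℝ) - 1))⁻¹ : ℝ) : EReal) :=
        aux_zeta v hv0 hvfin hvbot hvmul hvadd hp hvp u hzi1 hzi2
      have hzval' : v (ζ ^ i - 1) = ((((p : ℝ) ^ u * ((p : ℝ) - 1))⁻¹ : ℝ) : EReal) := by
        rw [← hzval]
        have h10 : (ζ ^ i - 1 : AlgebraicClosure K) = -(1 - ζ ^ i) := by ring
        rw [h10, aux_v_neg v hvfin hvbot hvmul]
      refine ⟨k, t, ⟨htlt, ⟨c, hc⟩, hndvd⟩, hk, ?_⟩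
      have h11 : algebraMap K (AlgebraicClosure K) (g.coeff i) * ((ζ ^ i - 1) * πs n ^ i)
           = (algebraMap K (AlgebraicClosure K) (g.coeff i) * πs n ^ i) * (ζ ^ i - 1) := by ring
      rw [h11, hvmul, hk, hzval', ← EReal.coe_add]
    have hterm : ∀ i ∈ Finset.range (p ^ n),
        (A : EReal) ≤ v (algebraMap K (AlgebraicClosure K) (g.coeff i) * ((ζ ^ i - 1) * πs n ^ i)) := by
      refine aux_v_sep v hv0 hvfin hvbot hvmul hvadd _ _ _ ?_ ?_
      · rw [← hσx]; exact hGal σ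
      · intro i hi j hj hij hsi hsj hveq
        have hci : g.coeff i ≠ 0 := by
          intro h0; apply hsi; simp only [h0, map_zero, zero_mul]
        have hcj : g.coeff j ≠ 0 := by
          intro h0; apply hsj; simp only [h0, map_zero, zero_mul]
        have hzi : (ζ ^ i - 1 : AlgebraicClosure K) ≠ 0 := by
          intro h0; apply hsi; rw [h0, zero_mul, mul_zero]
        have hzj : (ζ ^ j - 1 : AlgebraicClosure K) ≠ 0 := by
          intro h0; apply hsj; rw [h0, zero_mul, mul_zero]
        have hi0 : i ≠ 0 := by
          rintro rfl; apply hzi; rw [pow_zero, sub_self]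
        have hj0 : j ≠ 0 := by
          rintro rfl; apply hzj; rw [pow_zero, sub_self]
        apply hij
        obtain ⟨ki, ti, ⟨hti, hdi, hdi'⟩, hvTi, hvSi⟩ :=
          hval i hi0 (Finset.mem_range.mp hi) hci
        obtain ⟨kj, tj, ⟨htj, hdj, hdj'⟩, hvTj, hvSj⟩ :=
          hval j hj0 (Finset.mem_range.mp hj) hcj
        rw [hvSi, hvSj] at hveq
        have hreq : (ki : ℝ) / e + (i : ℝ) * ((e : ℝ) * (p : ℝ) ^ n)⁻¹
              + ((p : ℝ) ^ (n - 1 - ti) * ((p : ℝ) - 1))⁻¹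
            = (kj : ℝ) / e + (j : ℝ) * ((e : ℝ) * (p : ℝ) ^ n)⁻¹
              + ((p : ℝ) ^ (n - 1 - tj) * ((p : ℝ) - 1))⁻¹ := by exact_mod_cast hveq
        rw [aux_frac p e n ti hp he hti ki i, aux_frac p e n tj hp he htj kj j] at hreq
        have hDne : ((e : ℝ) * (p : ℝ) ^ n * ((p : ℝ) - 1)) ≠ 0 := by
          have h4 : (p : ℝ) ^ n ≠ 0 := pow_ne_zero _ hpRne
          have h5 : (p : ℝ) - 1 ≠ 0 := by linarith
          exact mul_ne_zero (mul_ne_zero heRne h4) h5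
        rw [div_eq_div_iff hDne hDne] at hreq
        have hZR := mul_right_cancel₀ hDne hreq
        have hZ : ((ki * (p : ℤ) ^ n + i) * ((p : ℤ) - 1) + e * (p : ℤ) ^ (ti + 1) : ℤ)
            = ((kj * (p : ℤ) ^ n + j) * ((p : ℤ) - 1) + e * (p : ℤ) ^ (tj + 1) : ℤ) := by
          exact_mod_cast hZR
        exact aux_int p hp e n i j ti tj ki kj (Finset.mem_range.mp hi)
          (Finset.mem_range.mp hj) hti htj hdi hdi' hdj hdj' hZ
    have hxy : x - y = ∑ i ∈ (Finset.range (p ^ n)).filter (fun i => ¬ q ∣ i),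
        algebraMap K (AlgebraicClosure K) (g.coeff i) * πs n ^ i := by
      have hsplit := Finset.sum_filter_add_sum_filter_not (Finset.range (p ^ n))
        (fun i => q ∣ i) (fun i => algebraMap K (AlgebraicClosure K) (g.coeff i) * πs n ^ i)
      rw [hydef]
      nth_rewrite 1 [hxsum]
      rw [← hsplit]
      ring
    rw [hxy]
    refine aux_v_sum v hv0 hvadd _ _ _ fun i hi => ?_
    obtain ⟨hiD, hiq⟩ := Finset.mem_filter.mp hi
    rcases eq_or_ne (g.coeff i) 0 with h0 | h0
    · simp only [h0, map_zero, zero_mul, hv0]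
      exact le_top
    · have hi0 : i ≠ 0 := by rintro rfl; exact hiq (dvd_zero q)
      obtain ⟨k, t, ⟨ht, hdt, hdt'⟩, hvT, hvS⟩ := hval i hi0 (Finset.mem_range.mp hiD) h0
      have htm : t < n - m := by
        by_contra hcon
        push_neg at hcon
        exact hiq (dvd_trans (pow_dvd_pow p hcon) hdt)
      have hmle : m ≤ n - 1 - t := by omega
      have hA := hterm i hiD
      rw [hvS] at hA
      have hAr : A ≤ (k : ℝ) / e + (i : ℝ) * ((e : ℝ) * (p : ℝ) ^ n)⁻¹
          + ((p : ℝ) ^ (n - 1 - t) * ((p : ℝ) - 1))⁻¹ := by exact_mod_cast hA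
      have hp1pos : (0 : ℝ) < (p : ℝ) - 1 := by linarith
      have hwle : ((p : ℝ) ^ (n - 1 - t) * ((p : ℝ) - 1))⁻¹
          ≤ ((p : ℝ) ^ m * ((p : ℝ) - 1))⁻¹ := by
        have hb : (0 : ℝ) < (p : ℝ) ^ m * ((p : ℝ) - 1) := by positivity
        apply inv_anti₀ hb
        have hpe : (p : ℝ) ^ m ≤ (p : ℝ) ^ (n - 1 - t) := by
          gcongr
          linarith
        nlinarith [hpe]
      rw [hvT, EReal.coe_le_coe_iff]
      rw [one_div]
      linarith [hAr, hwle]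
end

section
/- Let x ∈ K_n = K(π_n) where π_n^{p^n} = π is a uniformizer of K. Suppose that for every m ∈ ℕ there exists y_m ∈ K_m with v(x - y_m) ≥ A - 1/(p^m(p-1)). Then for every σ ∈ Gal(K̄/K), v(σx - x) ≥ A. -/
open Polynomial Finset

namespace Stmt5Aux

variable {L : Type*} [Field L]

structure IsVal (v : L → EReal) : Prop where
  zero : v 0 = ⊤
  fin : ∀ x : L, x ≠ 0 → v x ≠ ⊤
  bot : ∀ x : L, v x ≠ ⊥
  mul : ∀ x y : L, v (x * y) = v x + v y
  add : ∀ x y : L, min (v x) (v y) ≤ v (x + y)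

namespace IsVal

variable {v : L → EReal} (hv : IsVal v)
include hv

lemma v_real (x : L) (hx : x ≠ 0) : ∃ r : ℝ, v x = (r : EReal) := by
  lift v x to ℝ using ⟨hv.fin x hx, hv.bot x⟩ with r hr
  exact ⟨r, rfl⟩

lemma one : v 1 = 0 := by
  obtain ⟨r, hr⟩ := hv.v_real (1 : L) one_ne_zero
  have h := hv.mul 1 1
  rw [mul_one, hr] at h
  have : r = r + r := by exact_mod_cast h
  have : r = 0 := by linarith
  rw [hr, this]; rfl

lemma neg (x : L) : v (-x) = v x := by
  have hm1 : v (-1 : L) = 0 := by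
    obtain ⟨r, hr⟩ := hv.v_real (-1 : L) (by norm_num)
    have h := hv.mul (-1) (-1)
    rw [neg_mul_neg, one_mul, hv.one, hr] at h
    have : (0 : ℝ) = r + r := by exact_mod_cast h
    have : r = 0 := by linarith
    rw [hr, this]; rfl
  have := hv.mul (-1) x
  rw [hm1, zero_add] at this
  rw [← this, neg_one_mul]

lemma sub (x y : L) : min (v x) (v y) ≤ v (x - y) := by
  rw [sub_eq_add_neg]
  calc min (v x) (v y) = min (v x) (v (-y)) := by rw [hv.neg]
    _ ≤ _ := hv.add x (-y)

lemma sub_comm (x y : L) : v (x - y) = v (y - x) := by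
  rw [← neg_sub y x, hv.neg]

lemma eq_top (x : L) (h : v x = ⊤) : x = 0 := by
  by_contra hx
  exact hv.fin x hx h

lemma pow (x : L) {r : ℝ} (h : v x = (r : EReal)) (i : ℕ) :
    v (x ^ i) = ((i * r : ℝ) : EReal) := by
  induction i with
  | zero => simpa using hv.one
  | succ k ih =>
      rw [pow_succ, hv.mul, ih, h, ← EReal.coe_add]
      congr 1
      push_cast
      ring

lemma nat_nonneg (k : ℕ) : (0 : EReal) ≤ v (k : L) := by
  induction k with
  | zero => simp [hv.zero]
  | succ m ih =>
      push_cast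
      refine le_trans ?_ (hv.add (m : L) 1)
      rw [hv.one]
      exact le_min ih le_rfl

lemma sum_ge {ι : Type*} (S : Finset ι) (f : ι → L) (C : EReal)
    (h : ∀ i ∈ S, C ≤ v (f i)) : C ≤ v (∑ i ∈ S, f i) := by
  classical
  induction S using Finset.cons_induction with
  | empty => simp [hv.zero]
  | cons a S ha ih =>
      rw [Finset.sum_cons]
      refine le_trans ?_ (hv.add _ _)
      exact le_min (h a (Finset.mem_cons_self a S))
        (ih fun i hi => h i (Finset.mem_cons_of_mem hi))

lemma add_ne (x y : L) (h : v x ≠ v y) : v (x + y) = min (v x) (v y) := by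
  wlog hlt : v x < v y generalizing x y
  · rw [add_comm, min_comm]
    exact this y x h.symm (lt_of_le_of_ne (not_lt.1 hlt) h.symm)
  rw [min_eq_left hlt.le]
  refine le_antisymm ?_ (le_trans (le_min le_rfl hlt.le) (hv.add x y))
  by_contra hc
  push_neg at hc
  have h1 : v x = v ((x + y) + (-y)) := by ring_nf
  have h2 : min (v (x+y)) (v (-y)) ≤ v x := h1 ▸ hv.add (x+y) (-y)
  rw [hv.neg] at h2
  rcases min_le_iff.1 h2 with h3 | h3
  · exact absurd (lt_of_lt_of_le hc h3) (lt_irrefl _)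
  · exact absurd (lt_of_lt_of_le hlt h3) (lt_irrefl _)

lemma sum_inf {ι : Type*} [DecidableEq ι] (S : Finset ι) (f : ι → L)
    (hd : ∀ i ∈ S, ∀ j ∈ S, i ≠ j → v (f i) ≠ v (f j)) :
    v (∑ i ∈ S, f i) = S.inf fun i => v (f i) := by
  induction S using Finset.cons_induction with
  | empty => simp [hv.zero]
  | cons a S ha ih =>
      have hdS : ∀ i ∈ S, ∀ j ∈ S, i ≠ j → v (f i) ≠ v (f j) :=
        fun i hi j hj hij => hd i (Finset.mem_cons_of_mem hi) j (Finset.mem_cons_of_mem hj) hij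
      have ihS := ih hdS
      rw [Finset.sum_cons, Finset.inf_cons]
      by_cases hfa : v (f a) = ⊤
      · rw [hv.eq_top _ hfa, zero_add, ihS, hv.zero, top_inf_eq]
      by_cases hS : v (∑ i ∈ S, f i) = ⊤
      · rw [ihS] at hS
        rw [hv.eq_top _ (ihS.trans hS), add_zero, hS, inf_top_eq]
      · have hSne : S.Nonempty := by
          by_contra hemp
          rw [Finset.not_nonempty_iff_eq_empty] at hemp
          rw [ihS, hemp] at hS
          simp at hS
        obtain ⟨j, hj, hjinf⟩ := Finset.exists_mem_eq_inf S hSne fun i => v (f i)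
        have hne : v (f a) ≠ v (∑ i ∈ S, f i) := by
          rw [ihS, hjinf]
          exact hd a (Finset.mem_cons_self a S) j (Finset.mem_cons_of_mem hj)
            (fun h => ha (h ▸ hj))
        rw [hv.add_ne _ _ hne, ihS]

end IsVal
end Stmt5Aux

namespace Stmt5Aux
namespace IsVal
variable {L : Type*} [Field L] {v : L → EReal} (hv : IsVal v)
include hv

lemma root_bound (p : ℕ) (hp : p.Prime) (hvp : v ((p : ℕ) : L) = 1) :
    ∀ (j : ℕ) (η : L), η ^ p ^ j = 1 → η ≠ 1 →
      (((p : ℝ) / (p ^ j * ((p : ℝ) - 1)) : ℝ) : EReal) ≤ v (η - 1) := by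
  have hq2 : (2 : ℝ) ≤ (p : ℝ) := by exact_mod_cast hp.two_le
  intro j
  induction j with
  | zero =>
      intro η h h1
      rw [pow_zero, pow_one] at h
      exact absurd h h1
  | succ j ih =>
      intro η hpow hne
      have hη0 : η ≠ 0 := by
        intro h
        rw [h, zero_pow (pow_ne_zero (j + 1) hp.ne_zero)] at hpow
        exact zero_ne_one hpow
      have hvη : v η = ((0 : ℝ) : EReal) := by
        obtain ⟨r, hr⟩ := hv.v_real η hη0
        have h1 : v (η ^ p ^ (j + 1)) = (((p ^ (j + 1) : ℕ) * r : ℝ) : EReal) := by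
          simpa using hv.pow η hr (p ^ (j + 1))
        rw [hpow, hv.one] at h1
        have h2 : ((p ^ (j + 1) : ℕ) : ℝ) * r = 0 := by
          have h3 : (0 : EReal) = (((p ^ (j + 1) : ℕ) * r : ℝ) : EReal) := h1
          exact_mod_cast h3.symm
        have hr0 : r = 0 := by
          rcases mul_eq_zero.1 h2 with h | h
          · exfalso
            have : ((p ^ (j + 1) : ℕ) : ℝ) ≠ 0 := by
              have : (0:ℝ) < ((p ^ (j+1) : ℕ) : ℝ) := by exact_mod_cast pow_pos hp.pos (j+1)
              linarith
            exact this h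
          · exact h
        rw [hr, hr0]
      have hsub0 : η - 1 ≠ 0 := sub_ne_zero.2 hne
      obtain ⟨t, ht⟩ := hv.v_real (η - 1) hsub0
      have ht0 : (0 : ℝ) ≤ t := by
        have h1 : min (v η) (v 1) ≤ v (η - 1) := hv.sub η 1
        rw [hvη, hv.one, ht] at h1
        have : ((0:ℝ) : EReal) ≤ ((t:ℝ) : EReal) := by
          simpa using h1
        exact_mod_cast this
      -- binomial identity
      have hbin : η ^ p = 1 + (∑ k ∈ Finset.Ico 1 p, (η - 1) ^ k * (p.choose k : L)) + (η - 1) ^ p := by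
        have hb := add_pow (η - 1) (1 : L) p
        simp only [sub_add_cancel, one_pow, mul_one] at hb
        rw [hb, Finset.sum_range_succ, Nat.choose_self, Nat.cast_one, mul_one]
        congr 1
        rw [Finset.range_eq_Ico, Finset.sum_eq_sum_Ico_succ_bot hp.pos]
        simp [add_comm]
      have key : (η - 1) ^ p = (η ^ p - 1) - ∑ k ∈ Finset.Ico 1 p, (η - 1) ^ k * (p.choose k : L) := by
        rw [hbin]; ring
      have hS : ((1 + t : ℝ) : EReal) ≤ v (∑ k ∈ Finset.Ico 1 p, (η - 1) ^ k * (p.choose k : L)) := by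
        refine hv.sum_ge _ _ _ fun k hk => ?_
        obtain ⟨hk1, hk2⟩ := Finset.mem_Ico.1 hk
        obtain ⟨m, hm⟩ := (Nat.Prime.dvd_choose_self hp (by omega) hk2)
        have hvc : (1 : EReal) ≤ v ((p.choose k : ℕ) : L) := by
          rw [hm]
          push_cast
          rw [hv.mul, hvp]
          have h0 := hv.nat_nonneg (k := m)
          calc (1 : EReal) = 1 + 0 := by rw [add_zero]
            _ ≤ 1 + v ((m : ℕ) : L) := add_le_add le_rfl h0
        have hvk : v ((η - 1) ^ k) = ((k * t : ℝ) : EReal) := hv.pow _ ht k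
        rw [hv.mul, hvk]
        have h5 : ((1 + t : ℝ) : EReal) = ((t : ℝ) : EReal) + ((1:ℝ) : EReal) := by
          rw [← EReal.coe_add]; norm_num [add_comm]
        rw [h5]
        refine add_le_add ?_ ?_
        · apply EReal.coe_le_coe_iff.2
          nlinarith [ht0, (by exact_mod_cast hk1 : (1:ℝ) ≤ (k:ℝ))]
        · simpa using hvc
      have hmain : min (v (η ^ p - 1)) (((1 + t : ℝ) : EReal)) ≤ ((p * t : ℝ) : EReal) := by
        have hvp2 : v ((η - 1) ^ p) = ((p * t : ℝ) : EReal) := by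
          simpa using hv.pow _ ht p
        rw [← hvp2, key]
        refine le_trans ?_ (hv.sub _ _)
        exact min_le_min le_rfl hS
      set c : ℝ := (p : ℝ) / (p ^ j * ((p : ℝ) - 1)) with hc
      have hppow : (0:ℝ) < (p:ℝ) ^ (j + 1) := by positivity
      have hple : (p : ℝ) ≤ (p : ℝ) ^ (j + 1) := by
        calc (p : ℝ) = (p : ℝ) ^ 1 := (pow_one _).symm
          _ ≤ (p : ℝ) ^ (j + 1) := pow_le_pow_right₀ (by linarith) (by omega)
      have hcaseB : ((1 : ℝ) + t ≤ p * t) → (((p : ℝ) / (p ^ (j+1) * ((p : ℝ) - 1)) : ℝ) : EReal) ≤ v (η - 1) := by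
        intro hB
        rw [ht]
        apply EReal.coe_le_coe_iff.2
        rw [div_le_iff₀ (by nlinarith)]
        nlinarith
      by_cases hξ : η ^ p = 1
      · rw [hξ, sub_self, hv.zero, min_eq_right (le_top : ((1 + t : ℝ) : EReal) ≤ ⊤)] at hmain
        exact hcaseB (EReal.coe_le_coe_iff.1 hmain)
      · have hIH : ((c : ℝ) : EReal) ≤ v (η ^ p - 1) := by
          refine ih (η ^ p) ?_ hξ
          rw [← pow_mul, ← pow_succ']
          exact hpow
        have hmin : ((min c (1 + t) : ℝ) : EReal) ≤ ((p * t : ℝ) : EReal) := by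
          refine le_trans ?_ hmain
          rcases le_total c (1 + t) with h | h
          · rw [min_eq_left h]
            exact le_min (le_trans (by exact_mod_cast le_rfl) hIH) (by exact_mod_cast h)
          · rw [min_eq_right h]
            exact le_min (le_trans (by exact_mod_cast h) hIH) le_rfl
        have hrmin : min c (1 + t) ≤ p * t := EReal.coe_le_coe_iff.1 hmin
        rcases le_total c (1 + t) with h | h
        · rw [min_eq_left h] at hrmin
          -- p t ≥ c = p / (p^j (p-1)); conclude t ≥ p/(p^{j+1}(p-1))
          rw [ht]
          apply EReal.coe_le_coe_iff.2
          have hpj : (0:ℝ) < (p:ℝ) ^ j := pow_pos (by linarith) j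
          rw [div_le_iff₀ (by nlinarith)]
          rw [hc, div_le_iff₀ (mul_pos hpj (by linarith))] at hrmin
          have hps : (p:ℝ) ^ (j + 1) = (p:ℝ) ^ j * p := pow_succ _ _
          rw [hps]
          nlinarith [hrmin]
        · rw [min_eq_right h] at hrmin
          exact hcaseB hrmin

end IsVal
end Stmt5Aux

namespace Stmt5Aux

lemma repr {K : Type*} [Field K] {L : Type*} [Field L] [Algebra K L]
    (a : L) (ha : IsIntegral K a) (N : ℕ) (hN : N ≠ 0) (π : K)
    (haN : a ^ N = algebraMap K L π)
    (z : L) (hz : z ∈ IntermediateField.adjoin K {a}) :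
    ∃ c : ℕ → K, z = ∑ i ∈ Finset.range N, algebraMap K L (c i) * a ^ i := by
  rw [← IntermediateField.mem_toSubalgebra,
    IntermediateField.adjoin_simple_toSubalgebra_of_isAlgebraic ha.isAlgebraic,
    Algebra.adjoin_singleton_eq_range_aeval, AlgHom.mem_range] at hz
  obtain ⟨g, hg⟩ := hz
  set q : Polynomial K := X ^ N - C π with hq
  have hmon : q.Monic := monic_X_pow_sub_C π hN
  have haq : aeval a q = 0 := by
    rw [hq, map_sub, map_pow, aeval_X, aeval_C, haN, sub_self]
  have hz2 : z = aeval a (g %ₘ q) := by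
    conv_lhs => rw [← hg, ← modByMonic_add_div g q]
    simp [haq]
  have hdeg : (g %ₘ q).natDegree < N := by
    by_cases h0 : g %ₘ q = 0
    · rw [h0]
      simpa using Nat.pos_of_ne_zero hN
    · have h1 : (g %ₘ q).degree < q.degree := degree_modByMonic_lt g hmon
      have h2 : q.degree = (N : ℕ) := by
        rw [hq]
        exact degree_X_pow_sub_C (Nat.pos_of_ne_zero hN) π
      rw [h2] at h1
      exact (natDegree_lt_iff_degree_lt h0).2 h1
  refine ⟨fun i => (g %ₘ q).coeff i, ?_⟩
  rw [hz2, aeval_eq_sum_range' hdeg]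
  exact Finset.sum_congr rfl fun i _ => Algebra.smul_def _ _

end Stmt5Aux

/-- Setting: `K` finite totally ramified over `Frac W(k)` with index `e`, encoded by a
valuation `v` on an algebraic closure of `K` with `v p = 1`, `v π = 1/e`, `v(K^×) = (1/e)ℤ`;
`π_0 = π`, `π_{m+1}^p = π_m`, `K_m = K(π_m)`.  If `x ∈ K_n` is such that for every `m ∈ ℕ`
there is `y_m ∈ K_m` with `v (x - y_m) ≥ A - 1/(p^m (p-1))`, then
`v (σ x - x) ≥ A` for every `σ ∈ Gal(K̄/K)`. -/
theorem stmt5 (p : ℕ) [Fact p.Prime] (K : Type) [Field K] [CharZero K]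
    (e : ℕ) (he : 0 < e)
    (v : AlgebraicClosure K → EReal)
    (hv0 : v 0 = ⊤)
    (hvfin : ∀ x : AlgebraicClosure K, x ≠ 0 → v x ≠ ⊤)
    (hvbot : ∀ x : AlgebraicClosure K, v x ≠ ⊥)
    (hvmul : ∀ x y : AlgebraicClosure K, v (x * y) = v x + v y)
    (hvadd : ∀ x y : AlgebraicClosure K, min (v x) (v y) ≤ v (x + y))
    (hvp : v ((p : ℕ) : AlgebraicClosure K) = 1)
    (π : K)
    (hπ : v (algebraMap K (AlgebraicClosure K) π) = (((e : ℝ)⁻¹ : ℝ) : EReal))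
    (hdisc : ∀ y : K, y ≠ 0 →
      ∃ m : ℤ, v (algebraMap K (AlgebraicClosure K) y) = (((m : ℝ) / e : ℝ) : EReal))
    (πs : ℕ → AlgebraicClosure K)
    (hπ0 : πs 0 = algebraMap K (AlgebraicClosure K) π)
    (hπs : ∀ m, πs (m + 1) ^ p = πs m)
    (n : ℕ) (x : AlgebraicClosure K) (hx : x ∈ IntermediateField.adjoin K {πs n})
    (A : ℝ)
    (happrox : ∀ m : ℕ, ∃ y ∈ IntermediateField.adjoin K {πs m},
      (((A - 1 / (p ^ m * ((p : ℝ) - 1))) : ℝ) : EReal) ≤ v (x - y)) :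
    ∀ σ : AlgebraicClosure K ≃ₐ[K] AlgebraicClosure K, (A : EReal) ≤ v (σ x - x) := by
  intro σ
  have hv : Stmt5Aux.IsVal v := ⟨hv0, hvfin, hvbot, hvmul, hvadd⟩
  have hpprime : p.Prime := Fact.out
  have hp2 : 2 ≤ p := hpprime.two_le
  have hppos : 0 < p := by omega
  have hpR : (2 : ℝ) ≤ (p : ℝ) := by exact_mod_cast hp2
  -- towers
  have htow : ∀ m k : ℕ, πs m = πs (m + k) ^ p ^ k := by
    intro m k
    induction k with
    | zero => simp
    | succ k ih =>
        rw [ih, ← hπs (m + k), ← pow_mul,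
          show p * p ^ k = p ^ (k + 1) from (pow_succ' p k).symm,
          show m + k + 1 = m + (k + 1) from rfl]
  have htow0 : ∀ m : ℕ, πs m ^ p ^ m = algebraMap K (AlgebraicClosure K) π := by
    intro m
    induction m with
    | zero => simpa using hπ0
    | succ m ih =>
        rw [show p ^ (m + 1) = p * p ^ m from pow_succ' p m, pow_mul, hπs m]
        exact ih
  have hπne : π ≠ 0 := by
    intro h
    rw [h, map_zero, hv0] at hπ
    exact (EReal.coe_ne_top _) hπ.symm
  have halgπne : algebraMap K (AlgebraicClosure K) π ≠ 0 := fun h =>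
    hπne ((algebraMap K (AlgebraicClosure K)).injective (by rw [h, map_zero]))
  have hπsne : ∀ m : ℕ, πs m ≠ 0 := by
    intro m h
    rw [← htow0 m, h, zero_pow (pow_ne_zero m hppos.ne')] at halgπne
    exact halgπne rfl
  have hvπs : ∀ m : ℕ, v (πs m) = ((1 / (e * p ^ m) : ℝ) : EReal) := by
    intro m
    obtain ⟨r, hr⟩ := hv.v_real (πs m) (hπsne m)
    have h1 : v (πs m ^ p ^ m) = (((p ^ m : ℕ) * r : ℝ) : EReal) := by
      simpa using hv.pow (πs m) hr (p ^ m)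
    rw [htow0 m, hπ] at h1
    have h2 : ((e : ℝ))⁻¹ = ((p ^ m : ℕ) : ℝ) * r := EReal.coe_eq_coe_iff.1 h1
    have hrval : r = 1 / (e * p ^ m) := by
      have hpm : (0 : ℝ) < ((p ^ m : ℕ) : ℝ) := by exact_mod_cast pow_pos hppos m
      have heR : (0 : ℝ) < (e : ℝ) := by exact_mod_cast he
      field_simp at h2 ⊢
      push_cast at h2 ⊢
      nlinarith [h2]
    rw [hr, hrval]
  -- key upper bound on sums in K_m
  have key_le : ∀ (m : ℕ) (c : ℕ → K) (i₀ : ℕ), i₀ ∈ Finset.range (p ^ m) →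
      v (∑ i ∈ Finset.range (p ^ m), algebraMap K (AlgebraicClosure K) (c i) * πs m ^ i)
        ≤ v (algebraMap K (AlgebraicClosure K) (c i₀) * πs m ^ i₀) := by
    intro m c i₀ hi₀
    by_cases hc0 : c i₀ = 0
    · rw [hc0, map_zero, zero_mul, hv0]
      exact le_top
    classical
    set f : ℕ → AlgebraicClosure K := fun i => algebraMap K (AlgebraicClosure K) (c i) * πs m ^ i
      with hf
    set S := (Finset.range (p ^ m)).filter (fun i => c i ≠ 0) with hS
    have hsum : ∑ i ∈ Finset.range (p ^ m), f i = ∑ i ∈ S, f i := by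
      rw [hS]
      refine (Finset.sum_filter_of_ne fun i hi hne => ?_).symm
      intro hci
      exact hne (by rw [hf]; simp [hci])
    have hval : ∀ i ∈ S, ∃ ki : ℤ, v (f i) = (((ki * p ^ m + i) / (e * p ^ m) : ℝ) : EReal) := by
      intro i hiS
      obtain ⟨ki, hki⟩ := hdisc (c i) (Finset.mem_filter.1 hiS).2
      refine ⟨ki, ?_⟩
      rw [hf]
      simp only []
      rw [hvmul, hki, hv.pow (πs m) (hvπs m) i, ← EReal.coe_add]
      congr 1
      have hpm : (0 : ℝ) < (p : ℝ) ^ m := pow_pos (by linarith) m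
      have heR : (0 : ℝ) < (e : ℝ) := by exact_mod_cast he
      field_simp
    have hdist : ∀ i ∈ S, ∀ jj ∈ S, i ≠ jj → v (f i) ≠ v (f jj) := by
      intro i hi jj hj hij heq
      obtain ⟨ki, hki⟩ := hval i hi
      obtain ⟨kj, hkj⟩ := hval jj hj
      rw [hki, hkj] at heq
      have heqr : ((ki : ℝ) * p ^ m + i) / (e * p ^ m) = ((kj : ℝ) * p ^ m + jj) / (e * p ^ m) :=
        EReal.coe_eq_coe_iff.1 heq
      have hpm : (0 : ℝ) < (p : ℝ) ^ m := pow_pos (by linarith) m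
      have heR : (0 : ℝ) < (e : ℝ) := by exact_mod_cast he
      have h2 : (ki : ℝ) * p ^ m + i = (kj : ℝ) * p ^ m + jj := by
        have hne : (e : ℝ) * (p : ℝ) ^ m ≠ 0 := by positivity
        field_simp at heqr
        linarith [heqr]
      have h3 : ki * (p : ℤ) ^ m + i = kj * (p : ℤ) ^ m + jj := by exact_mod_cast h2
      have hilt : i < p ^ m := Finset.mem_range.1 (Finset.mem_filter.1 hi).1
      have hjlt : jj < p ^ m := Finset.mem_range.1 (Finset.mem_filter.1 hj).1
      have hdvd : ((p : ℤ) ^ m) ∣ ((jj : ℤ) - i) := ⟨ki - kj, by linarith [h3]⟩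
      have habs : ((p : ℤ) ^ m) ∣ |(jj : ℤ) - i| := (dvd_abs _ _).2 hdvd
      have hne0 : |(jj : ℤ) - i| ≠ 0 := by
        simp only [abs_ne_zero, sub_ne_zero]
        exact fun h => hij (by exact_mod_cast h.symm)
      have hge := Int.le_of_dvd (lt_of_le_of_ne (abs_nonneg _) (Ne.symm hne0)) habs
      have hlt2 : |(jj : ℤ) - i| < (p : ℤ) ^ m := by
        have h4 : ((jj : ℤ)) < (p : ℤ) ^ m := by exact_mod_cast hjlt
        have h5 : ((i : ℤ)) < (p : ℤ) ^ m := by exact_mod_cast hilt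
        rw [abs_lt]
        omega
      exact absurd hlt2 (not_lt.2 hge)
    rw [hsum, hv.sum_inf S f hdist]
    exact Finset.inf_le (Finset.mem_filter.2 ⟨hi₀, hc0⟩)
  have hint : ∀ m : ℕ, IsIntegral K (πs m) := fun m =>
    (Algebra.IsAlgebraic.isAlgebraic (πs m)).isIntegral
  obtain ⟨d, hd⟩ := Stmt5Aux.repr (πs n) (hint n) (p ^ n) (pow_ne_zero n hppos.ne') π
    (htow0 n) x hx
  have hane : πs n ≠ 0 := hπsne n
  set ζ : AlgebraicClosure K := σ (πs n) / πs n with hζ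
  have hσa : σ (πs n) = ζ * πs n := (div_mul_cancel₀ _ hane).symm
  have hζpow : ζ ^ p ^ n = 1 := by
    rw [hζ, div_pow, ← map_pow, htow0 n, AlgEquiv.commutes, div_self halgπne]
  have hσx : σ x - x = ∑ i ∈ Finset.range (p ^ n),
      algebraMap K (AlgebraicClosure K) (d i) * πs n ^ i * (ζ ^ i - 1) := by
    have h1 : σ x = ∑ i ∈ Finset.range (p ^ n),
        algebraMap K (AlgebraicClosure K) (d i) * (ζ * πs n) ^ i := by
      conv_lhs => rw [hd]
      rw [map_sum]
      refine Finset.sum_congr rfl fun i _ => ?_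
      rw [map_mul, map_pow, AlgEquiv.commutes, hσa]
    rw [h1]
    conv_lhs => rw [hd]
    rw [← Finset.sum_sub_distrib]
    refine Finset.sum_congr rfl fun i _ => ?_
    rw [mul_pow]
    ring
  rw [hσx]
  refine hv.sum_ge _ _ _ fun i hi => ?_
  by_cases hζi : ζ ^ i = 1
  · rw [hζi, sub_self, mul_zero, hv0]
    exact le_top
  have hi0 : i ≠ 0 := fun h => hζi (by rw [h, pow_zero])
  have hiltpn : i < p ^ n := Finset.mem_range.1 hi
  set w := padicValNat p i with hw
  have hw1 : p ^ w ∣ i := pow_padicValNat_dvd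
  have hw2 : ¬ p ^ (w + 1) ∣ i := pow_succ_padicValNat_not_dvd hi0
  have hwn : w + 1 ≤ n := by
    by_contra hcon
    push_neg at hcon
    have hdvd2 : p ^ n ∣ p ^ w := pow_dvd_pow p (by omega)
    have hle := Nat.le_of_dvd (Nat.pos_of_ne_zero hi0) (hdvd2.trans hw1)
    have hlt3 : i < p ^ n := hiltpn
    omega
  set m' := n - (w + 1) with hm'
  have hm'n : m' + (w + 1) = n := by omega
  obtain ⟨y, hymem, hyval⟩ := happrox m'
  set B : ℝ := 1 / (p ^ m' * ((p : ℝ) - 1)) with hB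
  have hroot : ((B : ℝ) : EReal) ≤ v (ζ ^ i - 1) := by
    obtain ⟨u, hu⟩ := hw1
    have hexp : (ζ ^ i) ^ p ^ (m' + 1) = 1 := by
      rw [← pow_mul]
      have h2 : i * p ^ (m' + 1) = p ^ n * u := by
        rw [hu, mul_comm (p ^ w) u, mul_assoc, ← pow_add,
          show w + (m' + 1) = n by omega]
        ring
      rw [h2, pow_mul, hζpow, one_pow]
    have h1 := hv.root_bound p hpprime hvp (m' + 1) (ζ ^ i) hexp hζi
    refine le_trans (le_of_eq ?_) h1
    rw [EReal.coe_eq_coe_iff, hB]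
    have hpm : (0 : ℝ) < (p : ℝ) ^ m' := pow_pos (by linarith) m'
    rw [pow_succ, div_eq_div_iff
      (mul_ne_zero (ne_of_gt hpm) (by intro h; linarith))
      (mul_ne_zero (mul_ne_zero (ne_of_gt hpm) (by intro h; linarith)) (by intro h; linarith))]
    ring
  have hcoef : v (x - y) ≤ v (algebraMap K (AlgebraicClosure K) (d i) * πs n ^ i) := by
    obtain ⟨b, hb⟩ := Stmt5Aux.repr (πs m') (hint m') (p ^ m') (pow_ne_zero m' hppos.ne') π
      (htow0 m') y hymem
    set P := p ^ (w + 1) with hP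
    have hPpos : 0 < P := pow_pos hppos _
    have hπm' : πs m' = πs n ^ P := by
      have h6 := htow m' (w + 1)
      rw [hm'n] at h6
      exact h6
    have hNfact : p ^ n = p ^ m' * P := by
      rw [hP, ← pow_add, hm'n]
    have hy2 : (∑ i' ∈ Finset.range (p ^ n),
        algebraMap K (AlgebraicClosure K) (if P ∣ i' then b (i' / P) else 0) * πs n ^ i') = y := by
      rw [hb]
      have hstep1 : ∑ i' ∈ Finset.range (p ^ n),
          algebraMap K (AlgebraicClosure K) (if P ∣ i' then b (i' / P) else 0) * πs n ^ i'
          = ∑ i' ∈ (Finset.range (p ^ n)).filter (fun i' => P ∣ i'),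
            algebraMap K (AlgebraicClosure K) (if P ∣ i' then b (i' / P) else 0) * πs n ^ i' := by
        symm
        refine Finset.sum_filter_of_ne fun i' hi' hne => ?_
        by_contra hnd
        exact hne (by rw [if_neg hnd, map_zero, zero_mul])
      have hstep2 : (Finset.range (p ^ n)).filter (fun i' => P ∣ i')
          = (Finset.range (p ^ m')).image (fun l => l * P) := by
        ext i'
        simp only [Finset.mem_filter, Finset.mem_range, Finset.mem_image]
        constructor
        · rintro ⟨hlt, u, hu⟩
          refine ⟨u, ?_, by rw [hu, mul_comm]⟩
          by_contra hge
          push_neg at hge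
          have h6 : p ^ m' * P ≤ u * P := Nat.mul_le_mul_right P hge
          have h7 : u * P = i' := by rw [hu, mul_comm]
          have h8 : i' < p ^ m' * P := by rw [← hNfact]; exact hlt
          omega
        · rintro ⟨l, hl, rfl⟩
          constructor
          · calc l * P < p ^ m' * P := (Nat.mul_lt_mul_right hPpos).2 hl
              _ = p ^ n := hNfact.symm
          · exact ⟨l, mul_comm l P⟩
      rw [hstep1, hstep2,
        Finset.sum_image (fun a _ c _ h => Nat.eq_of_mul_eq_mul_right hPpos h)]
      refine Finset.sum_congr rfl fun l hl => ?_
      rw [if_pos ⟨l, mul_comm l P⟩, Nat.mul_div_cancel l hPpos]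
      congr 1
      rw [hπm', ← pow_mul, mul_comm P l]
    have hxy : x - y = ∑ i' ∈ Finset.range (p ^ n),
        algebraMap K (AlgebraicClosure K) (d i' - if P ∣ i' then b (i' / P) else 0) * πs n ^ i' := by
      conv_lhs => rw [hd, ← hy2]
      rw [← Finset.sum_sub_distrib]
      refine Finset.sum_congr rfl fun i' _ => ?_
      rw [map_sub, sub_mul]
    rw [hxy]
    have hkey := key_le n (fun i' => d i' - if P ∣ i' then b (i' / P) else 0) i hi
    simpa [if_neg (show ¬ P ∣ i from hw2), sub_zero] using hkey
  have hterm : v (algebraMap K (AlgebraicClosure K) (d i) * πs n ^ i * (ζ ^ i - 1))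
      = v (algebraMap K (AlgebraicClosure K) (d i) * πs n ^ i) + v (ζ ^ i - 1) := hvmul _ _
  rw [hterm]
  calc (A : EReal) = ((A - B : ℝ) : EReal) + ((B : ℝ) : EReal) := by
        rw [← EReal.coe_add]
        congr 1
        ring
    _ ≤ v (x - y) + v (ζ ^ i - 1) := add_le_add hyval hroot
    _ ≤ v (algebraMap K (AlgebraicClosure K) (d i) * πs n ^ i) + v (ζ ^ i - 1) :=
        add_le_add hcoef le_rfl
end
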